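/- arXiv:1401.7895 — 3 statements merged into one kernel-verified Lean document; each statement's English description precedes it below -/
import Mathlib

section
/- (Finitely additive Yan theorem, (iii) ⇒ (i)) Let A be an algebra over Ω, λ ∈ ba(A)₊, K ⊆ L¹(λ) convex with 0 ∈ K, and C = K − Sim(A)₊. Suppose there exists a finitely additive probability P on A with K ⊆ L¹(P), sup_{k∈K} P(k) < ∞, sup{P(A)/λ(A) : λ(A) > 0} < ∞, and P(A) = 0 ⟺ λ(A) = 0 for A ∈ A. Then for every f ∈ L¹(λ) with f ≥ 0 and ∫ f dλ > 0, there exists η > 0 such that η·f does not belong to the L¹(λ)-closure of C. -/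
open Set Filter Topology

variable {Ω : Type*}

/-- `𝒜` is an algebra of subsets of `Ω`. -/
def IsAlg (𝒜 : Set (Set Ω)) : Prop :=
  ∅ ∈ 𝒜 ∧ Set.univ ∈ 𝒜 ∧ (∀ A ∈ 𝒜, Aᶜ ∈ 𝒜) ∧ ∀ A ∈ 𝒜, ∀ B ∈ 𝒜, A ∪ B ∈ 𝒜

/-- bounded finitely additive set function (element of ba(𝒜)). -/
def IsFinAdd (𝒜 : Set (Set Ω)) (μ : Set Ω → ℝ) : Prop :=
  μ ∅ = 0 ∧
  (∀ A ∈ 𝒜, ∀ B ∈ 𝒜, Disjoint A B → μ (A ∪ B) = μ A + μ B) ∧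
  ∃ C : ℝ, ∀ A ∈ 𝒜, |μ A| ≤ C

def IsPos (𝒜 : Set (Set Ω)) (μ : Set Ω → ℝ) : Prop := ∀ A ∈ 𝒜, 0 ≤ μ A

def IsCtblAdd (𝒜 : Set (Set Ω)) (μ : Set Ω → ℝ) : Prop :=
  ∀ A : ℕ → Set Ω, (∀ n, A n ∈ 𝒜) → Pairwise (Function.onFun Disjoint A) →
    (⋃ n, A n) ∈ 𝒜 → HasSum (fun n => μ (A n)) (μ (⋃ n, A n))

/-- total variation of `μ` on `A`. -/
noncomputable def tv (𝒜 : Set (Set Ω)) (μ : Set Ω → ℝ) (A : Set Ω) : ℝ :=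
  sSup {x | ∃ B ∈ 𝒜, B ⊆ A ∧ x = μ B - μ (A \ B)}

noncomputable def tvNorm (𝒜 : Set (Set Ω)) (μ : Set Ω → ℝ) : ℝ := tv 𝒜 μ Set.univ

/-- `ν ≪ μ`, absolute continuity in the ε-δ sense. -/
def AC (𝒜 : Set (Set Ω)) (ν μ : Set Ω → ℝ) : Prop :=
  ∀ ε > (0:ℝ), ∃ δ > (0:ℝ), ∀ E ∈ 𝒜, tv 𝒜 μ E < δ → tv 𝒜 ν E < ε

/-- `μ ⊥ ν`, singularity in the ε sense. -/
def Sing (𝒜 : Set (Set Ω)) (μ ν : Set Ω → ℝ) : Prop :=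
  ∀ ε > (0:ℝ), ∃ B ∈ 𝒜, tv 𝒜 μ Bᶜ + tv 𝒜 ν B < ε

/-- normalized total variation `|μ|/(1 ∨ ‖μ‖)`. -/
noncomputable def nvar (𝒜 : Set (Set Ω)) (μ : Set Ω → ℝ) (A : Set Ω) : ℝ :=
  tv 𝒜 μ A / (1 ⊔ tvNorm 𝒜 μ)

/-- membership in `𝐀(M)`: countable convex combinations of normalized variations. -/
def MemAM (𝒜 : Set (Set Ω)) (M : Set (Set Ω → ℝ)) (m : Set Ω → ℝ) : Prop :=
  ∃ (μ : ℕ → Set Ω → ℝ) (α : ℕ → ℝ),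
    (∀ n, μ n ∈ M) ∧ (∀ n, 0 ≤ α n) ∧ HasSum α 1 ∧
    ∀ A : Set Ω, m A = ∑' n, α n * nvar 𝒜 (μ n) A

/-- membership in `𝐋(M)`. -/
def MemLM (𝒜 : Set (Set Ω)) (M : Set (Set Ω → ℝ)) (ν : Set Ω → ℝ) : Prop :=
  ∃ m, MemAM 𝒜 M m ∧ AC 𝒜 ν m

/-- order on ba(𝒜). -/
def baLE (𝒜 : Set (Set Ω)) (μ ν : Set Ω → ℝ) : Prop := ∀ A ∈ 𝒜, μ A ≤ ν A

/-- λ-completion of 𝒜. -/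
def Completion (𝒜 : Set (Set Ω)) (l : Set Ω → ℝ) : Set (Set Ω) :=
  {B | ∀ ε > (0:ℝ), ∃ A ∈ 𝒜, ∃ A' ∈ 𝒜, A ⊆ B ∧ B ⊆ A' ∧ l (A' \ A) < ε}

/-- the extension `λ̄` to the completion. -/
noncomputable def extOf (𝒜 : Set (Set Ω)) (l : Set Ω → ℝ) (B : Set Ω) : ℝ :=
  sSup {x | ∃ A ∈ 𝒜, A ⊆ B ∧ x = l A}

/-- λ-atom. -/
def IsLAtom (𝒜 : Set (Set Ω)) (l : Set Ω → ℝ) (B : Set Ω) : Prop :=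
  B ∈ 𝒜 ∧ 0 < l B ∧ ∀ A ∈ 𝒜, A ⊆ B → l A = 0 ∨ l (B \ A) = 0

/-- simple 𝒜-measurable function. -/
def IsSimple (𝒜 : Set (Set Ω)) (f : Ω → ℝ) : Prop :=
  (Set.range f).Finite ∧ ∀ c : ℝ, f ⁻¹' {c} ∈ 𝒜

/-- integral of a simple function. -/
noncomputable def simpleInt (μ : Set Ω → ℝ) (f : Ω → ℝ) : ℝ :=
  ∑ᶠ c : ℝ, c * μ (f ⁻¹' {c})

/-- outer measure associated with l on 𝒜. -/
noncomputable def outerOf (𝒜 : Set (Set Ω)) (l : Set Ω → ℝ) (S : Set Ω) : ℝ :=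
  sInf {x | ∃ A ∈ 𝒜, S ⊆ A ∧ x = l A}

/-- Dunford–Schwartz approximating sequence for `f`. -/
def ApproxSeq (𝒜 : Set (Set Ω)) (l : Set Ω → ℝ) (f : Ω → ℝ) (g : ℕ → Ω → ℝ) : Prop :=
  (∀ n, IsSimple 𝒜 (g n)) ∧
  (∀ ε > (0:ℝ), ∃ N, ∀ p ≥ N, ∀ q ≥ N, simpleInt l (fun x => |g p x - g q x|) < ε) ∧
  (∀ ε > (0:ℝ), Tendsto (fun n => outerOf 𝒜 l {x | ε ≤ |g n x - f x|}) atTop (nhds 0))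

/-- membership in L¹(l). -/
def MemL1 (𝒜 : Set (Set Ω)) (l : Set Ω → ℝ) (f : Ω → ℝ) : Prop :=
  ∃ g, ApproxSeq 𝒜 l f g

/-- the Dunford–Schwartz integral. -/
noncomputable def dsInt (𝒜 : Set (Set Ω)) (l : Set Ω → ℝ) (f : Ω → ℝ) : ℝ :=
  sInf {I | ∃ g, ApproxSeq 𝒜 l f g ∧ Tendsto (fun n => simpleInt l (g n)) atTop (nhds I)}

/-- L¹ seminorm distance. -/
noncomputable def l1dist (𝒜 : Set (Set Ω)) (l : Set Ω → ℝ) (f h : Ω → ℝ) : ℝ :=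
  dsInt 𝒜 l (fun x => |f x - h x|)

/-- membership in the L¹(l)-closure of a set C of functions. -/
def InL1Closure (𝒜 : Set (Set Ω)) (l : Set Ω → ℝ) (C : Set (Ω → ℝ)) (f : Ω → ℝ) : Prop :=
  ∀ ε > (0:ℝ), ∃ h ∈ C, l1dist 𝒜 l f h < ε

/-- the set C = K − Sim(𝒜)₊. -/
def ConeDiff (𝒜 : Set (Set Ω)) (K : Set (Ω → ℝ)) : Set (Ω → ℝ) :=
  {f | ∃ k ∈ K, ∃ s : Ω → ℝ, IsSimple 𝒜 s ∧ (∀ x, 0 ≤ s x) ∧ f = k - s}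

section Aux
variable {Ω : Type*} {𝒜 : Set (Set Ω)} {μ : Set Ω → ℝ}

namespace YanAux

theorem alg_inter (hA : IsAlg 𝒜) {A B : Set Ω} (ha : A ∈ 𝒜) (hb : B ∈ 𝒜) : A ∩ B ∈ 𝒜 := by
  have := hA.2.2.1 _ (hA.2.2.2 _ (hA.2.2.1 _ ha) _ (hA.2.2.1 _ hb))
  rwa [compl_union, compl_compl, compl_compl] at this

theorem alg_diff (hA : IsAlg 𝒜) {A B : Set Ω} (ha : A ∈ 𝒜) (hb : B ∈ 𝒜) : A \ B ∈ 𝒜 :=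
  alg_inter hA ha (hA.2.2.1 _ hb)

theorem alg_biUnion (hA : IsAlg 𝒜) {ι : Type*} {s : Finset ι} {A : ι → Set Ω}
    (h : ∀ i ∈ s, A i ∈ 𝒜) : (⋃ i ∈ s, A i) ∈ 𝒜 := by
  classical
  induction s using Finset.induction_on with
  | empty => simpa using hA.1
  | @insert a s hni ih =>
    rw [Finset.set_biUnion_insert]
    exact hA.2.2.2 _ (h a (Finset.mem_insert_self a s)) _
      (ih fun i hi => h i (Finset.mem_insert_of_mem hi))

theorem mono_of_finAdd (hA : IsAlg 𝒜) (hμ : IsFinAdd 𝒜 μ) (hpos : IsPos 𝒜 μ)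
    {A B : Set Ω} (ha : A ∈ 𝒜) (hb : B ∈ 𝒜) (hsub : A ⊆ B) : μ A ≤ μ B := by
  have hd : A ∪ (B \ A) = B := union_diff_cancel hsub
  have h2 := hμ.2.1 A ha (B \ A) (alg_diff hA hb ha) disjoint_sdiff_right
  rw [hd] at h2
  have h3 := hpos _ (alg_diff hA hb ha)
  linarith

theorem subadd_of_finAdd (hA : IsAlg 𝒜) (hμ : IsFinAdd 𝒜 μ) (hpos : IsPos 𝒜 μ)
    {A B : Set Ω} (ha : A ∈ 𝒜) (hb : B ∈ 𝒜) : μ (A ∪ B) ≤ μ A + μ B := by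
  have h1 : A ∪ B = A ∪ (B \ A) := by rw [union_diff_self]
  have h2 := hμ.2.1 A ha (B \ A) (alg_diff hA hb ha) disjoint_sdiff_right
  rw [← h1] at h2
  have h3 : μ (B \ A) ≤ μ B := mono_of_finAdd hA hμ hpos (alg_diff hA hb ha) hb diff_subset
  linarith

theorem finAdd_sum (hA : IsAlg 𝒜) (hμ : IsFinAdd 𝒜 μ) {ι : Type*} (s : Finset ι)
    (A : ι → Set Ω) (h : ∀ i ∈ s, A i ∈ 𝒜)
    (hd : ∀ i ∈ s, ∀ j ∈ s, i ≠ j → Disjoint (A i) (A j)) :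
    μ (⋃ i ∈ s, A i) = ∑ i ∈ s, μ (A i) := by
  classical
  induction s using Finset.induction_on with
  | empty => simpa using hμ.1
  | @insert a s hni ih =>
    rw [Finset.set_biUnion_insert, Finset.sum_insert hni]
    have hrest : (⋃ i ∈ s, A i) ∈ 𝒜 := alg_biUnion hA fun i hi => h i (Finset.mem_insert_of_mem hi)
    have hdis : Disjoint (A a) (⋃ i ∈ s, A i) := by
      refine Set.disjoint_iUnion₂_right.mpr fun i hi =>
        hd a (Finset.mem_insert_self a s) i (Finset.mem_insert_of_mem hi) ?_
      rintro rfl; exact hni hi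
    rw [hμ.2.1 _ (h a (Finset.mem_insert_self a s)) _ hrest hdis,
      ih (fun i hi => h i (Finset.mem_insert_of_mem hi))
        (fun i hi j hj => hd i (Finset.mem_insert_of_mem hi) j (Finset.mem_insert_of_mem hj))]


theorem simpleInt_eq_sum (hA : IsAlg 𝒜) (hμ : IsFinAdd 𝒜 μ) {ι : Type*}
    (w : Ω → ι) (hw : (Set.range w).Finite) (hwA : ∀ p : ι, w ⁻¹' {p} ∈ 𝒜) (φ : ι → ℝ) :
    simpleInt μ (φ ∘ w) = ∑ p ∈ hw.toFinset, φ p * μ (w ⁻¹' {p}) := by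
  classical
  have hpre : ∀ c : ℝ, (φ ∘ w) ⁻¹' {c} = ⋃ p ∈ hw.toFinset.filter (fun p => φ p = c), w ⁻¹' {p} := by
    intro c
    ext x
    simp only [mem_preimage, Function.comp_apply, mem_singleton_iff, mem_iUnion,
      Finset.mem_filter, Set.Finite.mem_toFinset, mem_range]
    constructor
    · intro h; exact ⟨w x, ⟨⟨x, rfl⟩, h⟩, rfl⟩
    · rintro ⟨p, ⟨-, hp⟩, hx⟩; rw [show w x = p from hx, hp]
  have hmeas : ∀ c : ℝ, μ ((φ ∘ w) ⁻¹' {c}) =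
      ∑ p ∈ hw.toFinset.filter (fun p => φ p = c), μ (w ⁻¹' {p}) := by
    intro c
    rw [hpre c]
    refine finAdd_sum hA hμ _ _ (fun i _ => hwA i) ?_
    intro i _ j _ hij
    exact Set.disjoint_left.mpr (by rintro x (rfl : w x = i) (rfl : w x = j); exact hij rfl)
  have hsupp : (Function.support fun c : ℝ => c * μ ((φ ∘ w) ⁻¹' {c})) ⊆
      ↑((hw.image φ).toFinset) := by
    intro c hc
    simp only [Function.mem_support] at hc
    simp only [Finset.coe_sort_coe, Set.Finite.coe_toFinset]
    by_contra hcn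
    have : (φ ∘ w) ⁻¹' {c} = ∅ := by
      ext x
      simp only [mem_preimage, Function.comp_apply, mem_singleton_iff, mem_empty_iff_false,
        iff_false]
      intro h
      exact hcn ⟨w x, ⟨x, rfl⟩, h⟩
    rw [this, hμ.1, mul_zero] at hc
    exact hc rfl
  rw [simpleInt, finsum_eq_sum_of_support_subset _ hsupp]
  have : ∀ c ∈ (hw.image φ).toFinset,
      c * μ ((φ ∘ w) ⁻¹' {c}) = ∑ p ∈ hw.toFinset.filter (fun p => φ p = c), φ p * μ (w ⁻¹' {p}) := by
    intro c _
    rw [hmeas c, Finset.mul_sum]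
    refine Finset.sum_congr rfl fun p hp => ?_
    rw [(Finset.mem_filter.mp hp).2]
  rw [Finset.sum_congr rfl this]
  exact Finset.sum_fiberwise_of_maps_to (fun p hp => by
    simp only [Set.Finite.mem_toFinset] at hp ⊢
    exact mem_image_of_mem φ hp) _


theorem isSimple_comp (hA : IsAlg 𝒜) {ι : Type*} (w : Ω → ι) (hw : (Set.range w).Finite)
    (hwA : ∀ p : ι, w ⁻¹' {p} ∈ 𝒜) (φ : ι → ℝ) : IsSimple 𝒜 (φ ∘ w) := by
  classical
  constructor
  · exact (hw.image φ).subset (by rintro - ⟨x, rfl⟩; exact mem_image_of_mem φ ⟨x, rfl⟩)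
  · intro c
    have hpre : (φ ∘ w) ⁻¹' {c} = ⋃ p ∈ hw.toFinset.filter (fun p => φ p = c), w ⁻¹' {p} := by
      ext x
      simp only [mem_preimage, Function.comp_apply, mem_singleton_iff, mem_iUnion,
        Finset.mem_filter, Set.Finite.mem_toFinset, mem_range]
      constructor
      · intro h; exact ⟨w x, ⟨⟨x, rfl⟩, h⟩, rfl⟩
      · rintro ⟨p, ⟨-, hp⟩, hx⟩; rw [show w x = p from hx, hp]
    rw [hpre]
    exact alg_biUnion hA fun i _ => hwA i

/-- pairing of two simple functions -/
theorem pair_finite {u v : Ω → ℝ} (hu : IsSimple 𝒜 u) (hv : IsSimple 𝒜 v) :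
    (Set.range fun x => (u x, v x)).Finite :=
  ((hu.1.prod hv.1).subset (by rintro - ⟨x, rfl⟩; exact ⟨⟨x, rfl⟩, ⟨x, rfl⟩⟩))

theorem pair_fiber (hA : IsAlg 𝒜) {u v : Ω → ℝ} (hu : IsSimple 𝒜 u) (hv : IsSimple 𝒜 v) :
    ∀ p : ℝ × ℝ, (fun x => (u x, v x)) ⁻¹' {p} ∈ 𝒜 := by
  intro p
  have : (fun x => (u x, v x)) ⁻¹' {p} = u ⁻¹' {p.1} ∩ v ⁻¹' {p.2} := by
    ext x
    simp [Prod.ext_iff]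
  rw [this]
  exact alg_inter hA (hu.2 p.1) (hv.2 p.2)

theorem isSimple_op₂ (hA : IsAlg 𝒜) {u v : Ω → ℝ} (hu : IsSimple 𝒜 u)
    (hv : IsSimple 𝒜 v) (op : ℝ → ℝ → ℝ) : IsSimple 𝒜 (fun x => op (u x) (v x)) :=
  isSimple_comp hA _ (pair_finite hu hv) (pair_fiber hA hu hv) (fun p => op p.1 p.2)

theorem simpleInt_op₂ (hA : IsAlg 𝒜) (hμ : IsFinAdd 𝒜 μ) {u v : Ω → ℝ}
    (hu : IsSimple 𝒜 u) (hv : IsSimple 𝒜 v) (op : ℝ → ℝ → ℝ) :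
    simpleInt μ (fun x => op (u x) (v x)) =
      ∑ p ∈ (pair_finite hu hv).toFinset, op p.1 p.2 * μ ((fun x => (u x, v x)) ⁻¹' {p}) :=
  simpleInt_eq_sum hA hμ _ (pair_finite hu hv) (pair_fiber hA hu hv) (fun p => op p.1 p.2)

theorem simpleInt_add (hA : IsAlg 𝒜) (hμ : IsFinAdd 𝒜 μ) {u v : Ω → ℝ}
    (hu : IsSimple 𝒜 u) (hv : IsSimple 𝒜 v) :
    simpleInt μ (fun x => u x + v x) = simpleInt μ u + simpleInt μ v := by
  have h1 : simpleInt μ (fun x => u x + v x) = ∑ p ∈ (pair_finite hu hv).toFinset,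
      (p.1 + p.2) * μ ((fun x => (u x, v x)) ⁻¹' {p}) :=
    simpleInt_op₂ hA hμ hu hv (fun a b => a + b)
  have h2 : simpleInt μ u = ∑ p ∈ (pair_finite hu hv).toFinset,
      p.1 * μ ((fun x => (u x, v x)) ⁻¹' {p}) :=
    simpleInt_op₂ hA hμ hu hv (fun a b => a)
  have h3 : simpleInt μ v = ∑ p ∈ (pair_finite hu hv).toFinset,
      p.2 * μ ((fun x => (u x, v x)) ⁻¹' {p}) :=
    simpleInt_op₂ hA hμ hu hv (fun a b => b)
  rw [h1, h2, h3, ← Finset.sum_add_distrib]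
  exact Finset.sum_congr rfl fun p _ => add_mul _ _ _

theorem simpleInt_mono (hA : IsAlg 𝒜) (hμ : IsFinAdd 𝒜 μ) (hpos : IsPos 𝒜 μ) {u v : Ω → ℝ}
    (hu : IsSimple 𝒜 u) (hv : IsSimple 𝒜 v) (h : ∀ x, u x ≤ v x) :
    simpleInt μ u ≤ simpleInt μ v := by
  have h2 : simpleInt μ u = ∑ p ∈ (pair_finite hu hv).toFinset,
      p.1 * μ ((fun x => (u x, v x)) ⁻¹' {p}) :=
    simpleInt_op₂ hA hμ hu hv (fun a b => a)
  have h3 : simpleInt μ v = ∑ p ∈ (pair_finite hu hv).toFinset,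
      p.2 * μ ((fun x => (u x, v x)) ⁻¹' {p}) :=
    simpleInt_op₂ hA hμ hu hv (fun a b => b)
  rw [h2, h3]
  refine Finset.sum_le_sum fun p hp => ?_
  rcases Set.eq_empty_or_nonempty ((fun x => (u x, v x)) ⁻¹' {p}) with he | ⟨x, hx⟩
  · rw [he, hμ.1, mul_zero, mul_zero]
  · have hx' : (u x, v x) = p := hx
    have hle : p.1 ≤ p.2 := by rw [← hx']; exact h x
    exact mul_le_mul_of_nonneg_right hle (hpos _ (pair_fiber hA hu hv p))

theorem simpleInt_smul (hA : IsAlg 𝒜) (hμ : IsFinAdd 𝒜 μ) {u : Ω → ℝ}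
    (hu : IsSimple 𝒜 u) (c : ℝ) :
    simpleInt μ (fun x => c * u x) = c * simpleInt μ u := by
  have h1 : simpleInt μ (fun x => c * u x) = ∑ p ∈ (pair_finite hu hu).toFinset,
      (c * p.1) * μ ((fun x => (u x, u x)) ⁻¹' {p}) :=
    simpleInt_op₂ hA hμ hu hu (fun a b => c * a)
  have h2 : simpleInt μ u = ∑ p ∈ (pair_finite hu hu).toFinset,
      p.1 * μ ((fun x => (u x, u x)) ⁻¹' {p}) :=
    simpleInt_op₂ hA hμ hu hu (fun a b => a)
  rw [h1, h2, Finset.mul_sum]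
  exact Finset.sum_congr rfl fun p _ => by ring

theorem simpleInt_zero (hA : IsAlg 𝒜) (hμ : IsFinAdd 𝒜 μ) :
    simpleInt μ (fun _ : Ω => (0:ℝ)) = 0 := by
  classical
  have hsupp : (Function.support fun c : ℝ => c * μ ((fun _ : Ω => (0:ℝ)) ⁻¹' {c})) ⊆
      ↑((∅ : Finset ℝ)) := by
    intro c hc
    simp only [Function.mem_support] at hc
    exfalso
    rcases eq_or_ne c 0 with rfl | hc0
    · exact hc (zero_mul _)
    · have : (fun _ : Ω => (0:ℝ)) ⁻¹' {c} = ∅ := by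
        ext x; simp [hc0.symm]
      rw [this, hμ.1, mul_zero] at hc
      exact hc rfl
  rw [simpleInt, finsum_eq_sum_of_support_subset _ hsupp, Finset.sum_empty]

theorem simpleInt_nonneg (hA : IsAlg 𝒜) (hμ : IsFinAdd 𝒜 μ) (hpos : IsPos 𝒜 μ) {u : Ω → ℝ}
    (hu : IsSimple 𝒜 u) (h : ∀ x, 0 ≤ u x) : 0 ≤ simpleInt μ u := by
  have h0 : IsSimple 𝒜 (fun _ : Ω => (0:ℝ)) :=
    isSimple_op₂ hA hu hu (fun a b => 0)
  have := simpleInt_mono hA hμ hpos h0 hu h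
  rwa [simpleInt_zero hA hμ] at this

theorem isSimple_indicator (hA : IsAlg 𝒜) {B : Set Ω} (hB : B ∈ 𝒜) (c : ℝ) :
    IsSimple 𝒜 (Set.indicator B (fun _ => c)) := by
  classical
  have hw : (Set.range fun x : Ω => decide (x ∈ B)).Finite := Set.toFinite _
  have hwA : ∀ p : Bool, (fun x : Ω => decide (x ∈ B)) ⁻¹' {p} ∈ 𝒜 := by
    intro p
    cases p
    · have : (fun x : Ω => decide (x ∈ B)) ⁻¹' {false} = Bᶜ := by
        ext x; simp
      rw [this]; exact hA.2.2.1 _ hB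
    · have : (fun x : Ω => decide (x ∈ B)) ⁻¹' {true} = B := by
        ext x; simp
      rw [this]; exact hB
  have := isSimple_comp hA _ hw hwA (fun b => if b then c else 0)
  convert this using 1
  funext x
  by_cases hx : x ∈ B <;> simp [hx, Set.indicator]

theorem simpleInt_indicator (hμ : IsFinAdd 𝒜 μ) {B : Set Ω} (c : ℝ) :
    c ≠ 0 → simpleInt μ (Set.indicator B (fun _ => c)) = c * μ B := by
  classical
  intro hc
  have hsupp : (Function.support fun b : ℝ => b * μ (Set.indicator B (fun _ => c) ⁻¹' {b})) ⊆
      ↑({c} : Finset ℝ) := by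
    intro b hb
    simp only [Function.mem_support] at hb
    simp only [Finset.coe_singleton, mem_singleton_iff]
    by_contra hbc
    rcases eq_or_ne b 0 with rfl | hb0
    · exact hb (zero_mul _)
    · have : Set.indicator B (fun _ => c) ⁻¹' {b} = ∅ := by
        ext x
        simp only [mem_preimage, mem_singleton_iff, mem_empty_iff_false, iff_false]
        by_cases hx : x ∈ B <;> simp [hx, Set.indicator]
        · exact fun h => hbc h.symm
        · exact fun h => hb0 h.symm
      rw [this, hμ.1, mul_zero] at hb
      exact hb rfl
  rw [simpleInt, finsum_eq_sum_of_support_subset _ hsupp, Finset.sum_singleton]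
  congr 1
  have : Set.indicator B (fun _ => c) ⁻¹' {c} = B := by
    ext x
    simp only [mem_preimage, mem_singleton_iff]
    by_cases hx : x ∈ B <;> simp [hx, Set.indicator]
    exact fun h => hc h.symm
  rw [this]

theorem isSimple_preimage (hA : IsAlg 𝒜) {u : Ω → ℝ} (hu : IsSimple 𝒜 u) (S : Set ℝ) :
    u ⁻¹' S ∈ 𝒜 := by
  classical
  have : u ⁻¹' S = ⋃ a ∈ hu.1.toFinset.filter (fun a => a ∈ S), u ⁻¹' {a} := by
    ext x
    simp only [mem_preimage, mem_iUnion, Finset.mem_filter, Set.Finite.mem_toFinset,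
      mem_range, mem_singleton_iff]
    constructor
    · intro h; exact ⟨u x, ⟨⟨x, rfl⟩, h⟩, rfl⟩
    · rintro ⟨a, ⟨-, ha⟩, rfl⟩; exact ha
  rw [this]
  exact alg_biUnion hA fun a _ => hu.2 a


theorem isSimple_const (hA : IsAlg 𝒜) (c : ℝ) : IsSimple 𝒜 (fun _ : Ω => c) := by
  constructor
  · exact (Set.finite_singleton c).subset (by rintro - ⟨x, rfl⟩; rfl)
  · intro b
    rcases eq_or_ne c b with rfl | hb
    · have : (fun _ : Ω => c) ⁻¹' {c} = Set.univ := by ext x; simp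
      rw [this]; exact hA.2.1
    · have : (fun _ : Ω => c) ⁻¹' {b} = ∅ := by ext x; simp [hb]
      rw [this]; exact hA.1

theorem simpleInt_const (hA : IsAlg 𝒜) (hμ : IsFinAdd 𝒜 μ) (c : ℝ) :
    simpleInt μ (fun _ : Ω => c) = c * μ Set.univ := by
  rcases eq_or_ne c 0 with rfl | hc
  · rw [simpleInt_zero hA hμ, zero_mul]
  · have h := simpleInt_indicator (μ := μ) hμ (B := (Set.univ : Set Ω)) c hc
    rwa [Set.indicator_univ] at h

theorem simpleInt_sub (hA : IsAlg 𝒜) (hμ : IsFinAdd 𝒜 μ) {u v : Ω → ℝ}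
    (hu : IsSimple 𝒜 u) (hv : IsSimple 𝒜 v) :
    simpleInt μ (fun x => u x - v x) = simpleInt μ u - simpleInt μ v := by
  have hneg : IsSimple 𝒜 (fun x => (-1 : ℝ) * v x) := isSimple_op₂ hA hv hv (fun a _ => -1 * a)
  have h1 : (fun x => u x - v x) = fun x => u x + (-1 : ℝ) * v x := funext fun x => by ring
  rw [h1, simpleInt_add hA hμ hu hneg, simpleInt_smul hA hμ hv (-1)]
  ring

theorem abs_simpleInt_le (hA : IsAlg 𝒜) (hμ : IsFinAdd 𝒜 μ) (hpos : IsPos 𝒜 μ) {u : Ω → ℝ}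
    (hu : IsSimple 𝒜 u) : |simpleInt μ u| ≤ simpleInt μ (fun x => |u x|) := by
  have habs : IsSimple 𝒜 (fun x => |u x|) := isSimple_op₂ hA hu hu (fun a _ => |a|)
  have hneg : IsSimple 𝒜 (fun x => (-1 : ℝ) * u x) := isSimple_op₂ hA hu hu (fun a _ => -1 * a)
  rw [abs_le]
  constructor
  · have := simpleInt_mono hA hμ hpos hneg habs (fun x => by
      rw [neg_one_mul]; exact neg_le_abs (u x))
    rw [simpleInt_smul hA hμ hu (-1)] at this
    linarith
  · exact simpleInt_mono hA hμ hpos hu habs (fun x => le_abs_self _)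

theorem outer_nonneg (hA : IsAlg 𝒜) (hpos : IsPos 𝒜 μ) (S : Set Ω) :
    0 ≤ outerOf 𝒜 μ S := by
  refine le_csInf ⟨μ Set.univ, Set.univ, hA.2.1, subset_univ S, rfl⟩ ?_
  rintro x ⟨A, hAm, -, rfl⟩
  exact hpos A hAm

theorem outer_bddBelow (hA : IsAlg 𝒜) (hpos : IsPos 𝒜 μ) (S : Set Ω) :
    BddBelow {x | ∃ A ∈ 𝒜, S ⊆ A ∧ x = μ A} :=
  ⟨0, by rintro x ⟨A, hAm, -, rfl⟩; exact hpos A hAm⟩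

theorem outer_le (hA : IsAlg 𝒜) (hpos : IsPos 𝒜 μ) {S : Set Ω} {A : Set Ω}
    (hAm : A ∈ 𝒜) (hsub : S ⊆ A) : outerOf 𝒜 μ S ≤ μ A :=
  csInf_le (outer_bddBelow hA hpos S) ⟨A, hAm, hsub, rfl⟩

theorem outer_mono (hA : IsAlg 𝒜) (hpos : IsPos 𝒜 μ) {S T : Set Ω} (h : S ⊆ T) :
    outerOf 𝒜 μ S ≤ outerOf 𝒜 μ T := by
  refine le_csInf ⟨μ Set.univ, Set.univ, hA.2.1, subset_univ T, rfl⟩ ?_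
  rintro x ⟨A, hAm, hsub, rfl⟩
  exact outer_le hA hpos hAm (h.trans hsub)

theorem outer_subadd (hA : IsAlg 𝒜) (hμ : IsFinAdd 𝒜 μ) (hpos : IsPos 𝒜 μ) (S T : Set Ω) :
    outerOf 𝒜 μ (S ∪ T) ≤ outerOf 𝒜 μ S + outerOf 𝒜 μ T := by
  refine le_of_forall_pos_le_add fun ε hε => ?_
  obtain ⟨x, ⟨A, hAm, hSA, rfl⟩, hx⟩ := exists_lt_of_csInf_lt
    (s := {x | ∃ A ∈ 𝒜, S ⊆ A ∧ x = μ A}) ⟨μ Set.univ, Set.univ, hA.2.1, subset_univ S, rfl⟩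
    (lt_add_of_pos_right _ (half_pos hε))
  obtain ⟨y, ⟨B, hBm, hTB, rfl⟩, hy⟩ := exists_lt_of_csInf_lt
    (s := {x | ∃ A ∈ 𝒜, T ⊆ A ∧ x = μ A}) ⟨μ Set.univ, Set.univ, hA.2.1, subset_univ T, rfl⟩
    (lt_add_of_pos_right _ (half_pos hε))
  have h1 : outerOf 𝒜 μ (S ∪ T) ≤ μ (A ∪ B) :=
    outer_le hA hpos (hA.2.2.2 _ hAm _ hBm) (union_subset_union hSA hTB)
  have h2 := subadd_of_finAdd hA hμ hpos hAm hBm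
  have hx' : μ A < outerOf 𝒜 μ S + ε / 2 := hx
  have hy' : μ B < outerOf 𝒜 μ T + ε / 2 := hy
  linarith

/-- the key Dunford–Schwartz lemma: a nonneg, L¹-Cauchy sequence of simple functions
converging to 0 in outer measure has integrals tending to 0. -/
theorem hard_lemma (hA : IsAlg 𝒜) (hμ : IsFinAdd 𝒜 μ) (hpos : IsPos 𝒜 μ)
    (v : ℕ → Ω → ℝ) (hsimp : ∀ n, IsSimple 𝒜 (v n)) (hnn : ∀ n x, 0 ≤ v n x)
    (hC : ∀ ε > (0:ℝ), ∃ N, ∀ p ≥ N, ∀ q ≥ N, simpleInt μ (fun x => |v p x - v q x|) < ε)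
    (hm : ∀ ε > (0:ℝ), Tendsto (fun n => outerOf 𝒜 μ {x | ε ≤ v n x}) atTop (𝓝 0)) :
    Tendsto (fun n => simpleInt μ (v n)) atTop (𝓝 0) := by
  rw [Metric.tendsto_atTop]
  intro ε hε
  set T := μ Set.univ with hT
  have hT0 : 0 ≤ T := hpos _ hA.2.1
  set δ := ε / (3 * (T + 1)) with hδ
  have hδ0 : 0 < δ := by positivity
  obtain ⟨N₁, hN₁⟩ := hC (ε / 3) (by positivity)
  set M := sSup (Set.range (v N₁)) ⊔ 1 with hM
  have hM1 : (1:ℝ) ≤ M := le_sup_right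
  have hM0 : 0 < M := lt_of_lt_of_le one_pos hM1
  have hMb : ∀ x, v N₁ x ≤ M := fun x =>
    le_trans (le_csSup (hsimp N₁).1.bddAbove ⟨x, rfl⟩) le_sup_left
  have hm' := hm δ hδ0
  rw [Metric.tendsto_atTop] at hm'
  obtain ⟨N₂, hN₂⟩ := hm' (ε / (3 * M)) (by positivity)
  refine ⟨max N₁ N₂, fun n hn => ?_⟩
  have hn₁ : n ≥ N₁ := le_trans (le_max_left _ _) hn
  have hn₂ : n ≥ N₂ := le_trans (le_max_right _ _) hn
  have houter : outerOf 𝒜 μ {x | δ ≤ v n x} < ε / (3 * M) := by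
    have := hN₂ n hn₂
    rw [Real.dist_eq, sub_zero, abs_of_nonneg (outer_nonneg hA hpos _)] at this
    exact this
  obtain ⟨x, ⟨A, hAm, hsub, rfl⟩, hxlt⟩ := exists_lt_of_csInf_lt
    (s := {x | ∃ A ∈ 𝒜, {x | δ ≤ v n x} ⊆ A ∧ x = μ A})
    ⟨μ Set.univ, Set.univ, hA.2.1, subset_univ _, rfl⟩ houter
  -- pointwise bound
  set u2 : Ω → ℝ := fun x => |v n x - v N₁ x| with hu2
  set u3 : Ω → ℝ := Set.indicator A (fun _ => M) with hu3
  have hu2s : IsSimple 𝒜 u2 := isSimple_op₂ hA (hsimp n) (hsimp N₁) (fun a b => |a - b|)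
  have hu3s : IsSimple 𝒜 u3 := isSimple_indicator hA hAm M
  have hu1s : IsSimple 𝒜 (fun _ : Ω => δ) := isSimple_const hA δ
  have hu12s : IsSimple 𝒜 (fun x => δ + u2 x) := isSimple_op₂ hA hu1s hu2s (fun a b => a + b)
  have hptw : ∀ x, v n x ≤ (fun x => δ + u2 x) x + u3 x := by
    intro x
    by_cases hx : x ∈ A
    · have : u3 x = M := by simp [hu3, Set.indicator_of_mem hx]
      rw [this]
      have h1 : v n x ≤ u2 x + v N₁ x := by
        have := abs_sub_abs_le_abs_sub (v n x) (v N₁ x)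
        have h2 := le_abs_self (v n x - v N₁ x)
        simp only [hu2]
        nlinarith [hMb x]
      simp only []
      nlinarith [hMb x, hδ0.le]
    · have hlt : v n x < δ := by
        by_contra hge
        exact hx (hsub (by simpa using not_lt.mp hge))
      have : u3 x = 0 := by simp [hu3, Set.indicator_of_notMem hx]
      rw [this]
      simp only []
      nlinarith [abs_nonneg (v n x - v N₁ x)]
  have hint : simpleInt μ (v n) ≤ simpleInt μ (fun x => (fun x => δ + u2 x) x + u3 x) :=
    simpleInt_mono hA hμ hpos (hsimp n) (isSimple_op₂ hA hu12s hu3s (fun a b => a + b)) hptw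
  rw [simpleInt_add hA hμ hu12s hu3s, simpleInt_add hA hμ hu1s hu2s,
    simpleInt_const hA hμ δ] at hint
  have hi2 : simpleInt μ u2 < ε / 3 := hN₁ n hn₁ N₁ (le_refl N₁)
  have hi3 : simpleInt μ u3 ≤ M * μ A := by
    rcases eq_or_ne M 0 with hM' | hM'
    · exact absurd hM' (ne_of_gt hM0)
    · rw [hu3, simpleInt_indicator hμ M hM']
  have hμA : μ A < ε / (3 * M) := hxlt
  have h3 : M * μ A < M * (ε / (3 * M)) := by
    exact mul_lt_mul_of_pos_left hμA hM0
  have hMε : M * (ε / (3 * M)) = ε / 3 := by field_simp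
  have hδT : δ * T < ε / 3 := by
    rw [hδ]
    rw [div_mul_eq_mul_div, div_lt_div_iff₀ (by positivity) (by norm_num : (0:ℝ) < 3)]
    nlinarith
  rw [Real.dist_eq, sub_zero, abs_of_nonneg (simpleInt_nonneg hA hμ hpos (hsimp n) (hnn n))]
  nlinarith


theorem simpleInt_eq_sum' (hA : IsAlg 𝒜) (hμ : IsFinAdd 𝒜 μ) {u : Ω → ℝ} (hu : IsSimple 𝒜 u) :
    simpleInt μ u = ∑ a ∈ hu.1.toFinset, a * μ (u ⁻¹' {a}) :=
  simpleInt_eq_sum hA hμ u hu.1 hu.2 id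

/-- every approximating sequence has converging integrals -/
theorem approx_tendsto (hA : IsAlg 𝒜) (hμ : IsFinAdd 𝒜 μ) (hpos : IsPos 𝒜 μ) {F : Ω → ℝ}
    {g : ℕ → Ω → ℝ} (hg : ApproxSeq 𝒜 μ F g) :
    ∃ I, Tendsto (fun n => simpleInt μ (g n)) atTop (𝓝 I) := by
  refine cauchySeq_tendsto_of_complete ?_
  rw [Metric.cauchySeq_iff]
  intro ε hε
  obtain ⟨N, hN⟩ := hg.2.1 ε hε
  refine ⟨N, fun p hp q hq => ?_⟩
  rw [Real.dist_eq, ← simpleInt_sub hA hμ (hg.1 p) (hg.1 q)]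
  exact lt_of_le_of_lt
    (abs_simpleInt_le hA hμ hpos (isSimple_op₂ hA (hg.1 p) (hg.1 q) (fun a b => a - b)))
    (hN p hp q hq)

/-- comparison of limits of approximating sequences for pointwise-comparable functions -/
theorem lim_mono (hA : IsAlg 𝒜) (hμ : IsFinAdd 𝒜 μ) (hpos : IsPos 𝒜 μ) {F G : Ω → ℝ}
    (hFG : ∀ x, G x ≤ F x) {a b : ℕ → Ω → ℝ}
    (ha : ApproxSeq 𝒜 μ F a) (hb : ApproxSeq 𝒜 μ G b) {Ia Ib : ℝ}
    (hta : Tendsto (fun n => simpleInt μ (a n)) atTop (𝓝 Ia))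
    (htb : Tendsto (fun n => simpleInt μ (b n)) atTop (𝓝 Ib)) : Ib ≤ Ia := by
  set c : ℕ → Ω → ℝ := fun n x => max (b n x - a n x) 0 with hc
  have hcs : ∀ n, IsSimple 𝒜 (c n) := fun n =>
    isSimple_op₂ hA (hb.1 n) (ha.1 n) (fun x y => max (x - y) 0)
  have hcnn : ∀ n x, 0 ≤ c n x := fun n x => le_max_right _ _
  -- Cauchy
  have hcC : ∀ ε > (0:ℝ), ∃ N, ∀ p ≥ N, ∀ q ≥ N,
      simpleInt μ (fun x => |c p x - c q x|) < ε := by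
    intro ε hε
    obtain ⟨N₁, hN₁⟩ := ha.2.1 (ε / 2) (by positivity)
    obtain ⟨N₂, hN₂⟩ := hb.2.1 (ε / 2) (by positivity)
    refine ⟨max N₁ N₂, fun p hp q hq => ?_⟩
    have hp₁ : p ≥ N₁ := le_trans (le_max_left _ _) hp
    have hp₂ : p ≥ N₂ := le_trans (le_max_right _ _) hp
    have hq₁ : q ≥ N₁ := le_trans (le_max_left _ _) hq
    have hq₂ : q ≥ N₂ := le_trans (le_max_right _ _) hq
    have h1 : IsSimple 𝒜 (fun x => |a p x - a q x|) :=
      isSimple_op₂ hA (ha.1 p) (ha.1 q) (fun x y => |x - y|)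
    have h2 : IsSimple 𝒜 (fun x => |b p x - b q x|) :=
      isSimple_op₂ hA (hb.1 p) (hb.1 q) (fun x y => |x - y|)
    have hptw : ∀ x, |c p x - c q x| ≤
        (fun x => |a p x - a q x|) x + (fun x => |b p x - b q x|) x := by
      intro x
      simp only [hc]
      have h3 : |max (b p x - a p x) 0 - max (b q x - a q x) 0| ≤
          |(b p x - a p x) - (b q x - a q x)| := abs_max_sub_max_le_abs _ _ _
      calc |max (b p x - a p x) 0 - max (b q x - a q x) 0|
          ≤ |(b p x - a p x) - (b q x - a q x)| := h3
        _ ≤ |a p x - a q x| + |b p x - b q x| := by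
            have := abs_sub (b p x - b q x) (a p x - a q x)
            have h4 : (b p x - a p x) - (b q x - a q x) = (b p x - b q x) - (a p x - a q x) := by
              ring
            rw [h4]
            calc |(b p x - b q x) - (a p x - a q x)| ≤ |b p x - b q x| + |a p x - a q x| :=
                  abs_sub _ _
              _ = |a p x - a q x| + |b p x - b q x| := by ring
    have hmono := simpleInt_mono hA hμ hpos
      (isSimple_op₂ hA (hcs p) (hcs q) (fun x y => |x - y|))
      (isSimple_op₂ hA h1 h2 (fun x y => x + y)) hptw
    rw [simpleInt_add hA hμ h1 h2] at hmono
    have := hN₁ p hp₁ q hq₁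
    have := hN₂ p hp₂ q hq₂
    linarith
  -- convergence in measure to 0
  have hcm : ∀ ε > (0:ℝ), Tendsto (fun n => outerOf 𝒜 μ {x | ε ≤ c n x}) atTop (𝓝 0) := by
    intro ε hε
    have hsub : ∀ n, {x | ε ≤ c n x} ⊆
        {x | ε / 2 ≤ |a n x - F x|} ∪ {x | ε / 2 ≤ |b n x - G x|} := by
      intro n x hx
      simp only [mem_setOf_eq] at hx
      by_contra hcon
      simp only [mem_union, mem_setOf_eq, not_or, not_le] at hcon
      obtain ⟨h1, h2⟩ := hcon
      have hba : b n x - a n x ≥ ε := by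
        have : c n x = max (b n x - a n x) 0 := rfl
        rcases le_or_gt (b n x - a n x) 0 with h | h
        · rw [this, max_eq_right h] at hx; linarith
        · rw [this, max_eq_left h.le] at hx; exact hx
      have e1 : b n x - a n x = (b n x - G x) + (G x - F x) + (F x - a n x) := by ring
      have e2 : b n x - G x ≤ |b n x - G x| := le_abs_self _
      have e3 : F x - a n x ≤ |a n x - F x| := by
        rw [abs_sub_comm]; exact le_abs_self _
      have e4 : G x - F x ≤ 0 := by linarith [hFG x]
      linarith
    have h1 := ha.2.2 (ε / 2) (by positivity)
    have h2 := hb.2.2 (ε / 2) (by positivity)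
    refine squeeze_zero (fun n => outer_nonneg hA hpos _)
      (fun n => le_trans (outer_mono hA hpos (hsub n)) (outer_subadd hA hμ hpos _ _))
      ?_
    have := h1.add h2
    simpa using this
  have hczero := hard_lemma hA hμ hpos c hcs hcnn hcC hcm
  -- b n ≤ a n + c n pointwise
  have hun : ∀ n, simpleInt μ (b n) ≤ simpleInt μ (a n) + simpleInt μ (c n) := by
    intro n
    have hptw : ∀ x, b n x ≤ (fun x => a n x + c n x) x := by
      intro x
      simp only [hc]
      rcases le_max_iff.mpr (Or.inl (le_refl (b n x - a n x))) with h
      have : b n x - a n x ≤ max (b n x - a n x) 0 := le_max_left _ _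
      linarith
    have := simpleInt_mono hA hμ hpos (hb.1 n)
      (isSimple_op₂ hA (ha.1 n) (hcs n) (fun x y => x + y)) hptw
    rwa [simpleInt_add hA hμ (ha.1 n) (hcs n)] at this
  have hfinal := le_of_tendsto_of_tendsto' htb (hta.add hczero) hun
  simpa using hfinal

/-- the value of dsInt is the limit along any approximating sequence -/
theorem dsInt_eq (hA : IsAlg 𝒜) (hμ : IsFinAdd 𝒜 μ) (hpos : IsPos 𝒜 μ) {F : Ω → ℝ}
    {g : ℕ → Ω → ℝ} (hg : ApproxSeq 𝒜 μ F g) {I : ℝ}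
    (ht : Tendsto (fun n => simpleInt μ (g n)) atTop (𝓝 I)) : dsInt 𝒜 μ F = I := by
  have hmem : I ∈ {I | ∃ g, ApproxSeq 𝒜 μ F g ∧
      Tendsto (fun n => simpleInt μ (g n)) atTop (𝓝 I)} := ⟨g, hg, ht⟩
  have huniq : ∀ J ∈ {I | ∃ g, ApproxSeq 𝒜 μ F g ∧
      Tendsto (fun n => simpleInt μ (g n)) atTop (𝓝 I)}, J = I := by
    rintro J ⟨g', hg', ht'⟩
    exact le_antisymm (lim_mono hA hμ hpos (fun x => le_refl (F x)) hg hg' ht ht')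
      (lim_mono hA hμ hpos (fun x => le_refl (F x)) hg' hg ht' ht)
  have hset : {I | ∃ g, ApproxSeq 𝒜 μ F g ∧
      Tendsto (fun n => simpleInt μ (g n)) atTop (𝓝 I)} = {I} := by
    apply Set.eq_singleton_iff_unique_mem.mpr
    exact ⟨hmem, huniq⟩
  rw [dsInt, hset, csInf_singleton]


section Transfer
variable {P : Set Ω → ℝ} {c' : ℝ}

theorem simpleInt_comp (hA : IsAlg 𝒜) (hμ : IsFinAdd 𝒜 μ) (hP : IsFinAdd 𝒜 P)
    (hc' : 0 ≤ c') (hcomp : ∀ A ∈ 𝒜, P A ≤ c' * μ A) {u : Ω → ℝ} (hu : IsSimple 𝒜 u)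
    (hnn : ∀ x, 0 ≤ u x) : simpleInt P u ≤ c' * simpleInt μ u := by
  rw [simpleInt_eq_sum' hA hμ hu, simpleInt_eq_sum' hA hP hu, Finset.mul_sum]
  refine Finset.sum_le_sum fun a ha => ?_
  rcases Set.eq_empty_or_nonempty (u ⁻¹' {a}) with he | ⟨x, hx⟩
  · rw [he, hμ.1, hP.1]; simp
  · have hax : u x = a := hx
    have ha0 : 0 ≤ a := hax ▸ hnn x
    calc a * P (u ⁻¹' {a}) ≤ a * (c' * μ (u ⁻¹' {a})) :=
          mul_le_mul_of_nonneg_left (hcomp _ (hu.2 a)) ha0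
      _ = c' * (a * μ (u ⁻¹' {a})) := by ring

theorem outer_comp (hA : IsAlg 𝒜) (hposμ : IsPos 𝒜 μ) (hposP : IsPos 𝒜 P)
    (hc' : 0 ≤ c') (hcomp : ∀ A ∈ 𝒜, P A ≤ c' * μ A) (S : Set Ω) :
    outerOf 𝒜 P S ≤ c' * outerOf 𝒜 μ S := by
  refine le_of_forall_pos_le_add fun ε hε => ?_
  obtain ⟨x, ⟨A, hAm, hSA, rfl⟩, hx⟩ := exists_lt_of_csInf_lt
    (s := {x | ∃ A ∈ 𝒜, S ⊆ A ∧ x = μ A}) ⟨μ Set.univ, Set.univ, hA.2.1, subset_univ S, rfl⟩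
    (lt_add_of_pos_right (sInf _) (div_pos hε (by linarith : (0:ℝ) < c' + 1)))
  have h1 : outerOf 𝒜 P S ≤ P A := outer_le hA hposP hAm hSA
  have h2 : P A ≤ c' * μ A := hcomp A hAm
  have hx' : μ A < outerOf 𝒜 μ S + ε / (c' + 1) := hx
  have h3 : c' * μ A ≤ c' * (outerOf 𝒜 μ S + ε / (c' + 1)) :=
    mul_le_mul_of_nonneg_left hx'.le hc'
  have h4 : c' * (ε / (c' + 1)) ≤ ε := by
    rw [mul_div_assoc']
    rw [div_le_iff₀ (by linarith : (0:ℝ) < c' + 1)]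
    nlinarith
  nlinarith

theorem approx_transfer (hA : IsAlg 𝒜) (hμ : IsFinAdd 𝒜 μ) (hposμ : IsPos 𝒜 μ)
    (hP : IsFinAdd 𝒜 P) (hposP : IsPos 𝒜 P)
    (hc' : 0 ≤ c') (hcomp : ∀ A ∈ 𝒜, P A ≤ c' * μ A) {F : Ω → ℝ} {g : ℕ → Ω → ℝ}
    (hg : ApproxSeq 𝒜 μ F g) : ApproxSeq 𝒜 P F g := by
  refine ⟨hg.1, ?_, ?_⟩
  · intro ε hε
    obtain ⟨N, hN⟩ := hg.2.1 (ε / (c' + 1)) (div_pos hε (by linarith))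
    refine ⟨N, fun p hp q hq => ?_⟩
    have h1 : simpleInt P (fun x => |g p x - g q x|) ≤
        c' * simpleInt μ (fun x => |g p x - g q x|) :=
      simpleInt_comp hA hμ hP hc' hcomp
        (isSimple_op₂ hA (hg.1 p) (hg.1 q) (fun a b => |a - b|)) (fun x => abs_nonneg _)
    have h2 := hN p hp q hq
    have h3 : c' * simpleInt μ (fun x => |g p x - g q x|) ≤ c' * (ε / (c' + 1)) :=
      mul_le_mul_of_nonneg_left h2.le hc'
    have h4 : c' * (ε / (c' + 1)) < ε := by
      rw [mul_div_assoc', div_lt_iff₀ (by linarith : (0:ℝ) < c' + 1)]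
      nlinarith
    linarith
  · intro ε hε
    refine squeeze_zero (fun n => outer_nonneg hA hposP _)
      (fun n => outer_comp hA hposμ hposP hc' hcomp _) ?_
    have := (hg.2.2 ε hε).const_mul c'
    simpa using this

end Transfer

/-- the positive part of an approximating sequence of a nonnegative function -/
theorem approx_pos (hA : IsAlg 𝒜) (hμ : IsFinAdd 𝒜 μ) (hpos : IsPos 𝒜 μ) {F : Ω → ℝ}
    (hF : ∀ x, 0 ≤ F x) {g : ℕ → Ω → ℝ} (hg : ApproxSeq 𝒜 μ F g) :
    ApproxSeq 𝒜 μ F (fun n x => max (g n x) 0) := by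
  refine ⟨fun n => isSimple_op₂ hA (hg.1 n) (hg.1 n) (fun a b => max a 0), ?_, ?_⟩
  · intro ε hε
    obtain ⟨N, hN⟩ := hg.2.1 ε hε
    refine ⟨N, fun p hp q hq => ?_⟩
    have hptw : ∀ x, |max (g p x) 0 - max (g q x) 0| ≤ (fun x => |g p x - g q x|) x :=
      fun x => abs_max_sub_max_le_abs _ _ _
    have := simpleInt_mono hA hμ hpos
      (isSimple_op₂ hA (isSimple_op₂ hA (hg.1 p) (hg.1 p) (fun a b => max a 0))
        (isSimple_op₂ hA (hg.1 q) (hg.1 q) (fun a b => max a 0)) (fun a b => |a - b|))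
      (isSimple_op₂ hA (hg.1 p) (hg.1 q) (fun a b => |a - b|)) hptw
    exact lt_of_le_of_lt this (hN p hp q hq)
  · intro ε hε
    have hsub : ∀ n, {x | ε ≤ |max (g n x) 0 - F x|} ⊆ {x | ε ≤ |g n x - F x|} := by
      intro n x hx
      simp only [mem_setOf_eq] at hx ⊢
      refine le_trans hx ?_
      rcases le_or_gt 0 (g n x) with h | h
      · rw [max_eq_left h]
      · rw [max_eq_right h.le]
        rw [abs_of_nonpos (by linarith [hF x] : (0:ℝ) - F x ≤ 0),
          abs_of_nonpos (by linarith [hF x] : g n x - F x ≤ 0)]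
        linarith
    exact squeeze_zero (fun n => outer_nonneg hA hpos _)
      (fun n => outer_mono hA hpos (hsub n)) (hg.2.2 ε hε)


theorem outer_empty (hA : IsAlg 𝒜) (hμ : IsFinAdd 𝒜 μ) (hpos : IsPos 𝒜 μ) :
    outerOf 𝒜 μ (∅ : Set Ω) = 0 := by
  refine le_antisymm ?_ (outer_nonneg hA hpos _)
  have := outer_le hA hpos hA.1 (subset_refl (∅ : Set Ω))
  rwa [hμ.1] at this

theorem approx_const (hA : IsAlg 𝒜) (hμ : IsFinAdd 𝒜 μ) (hpos : IsPos 𝒜 μ) {u : Ω → ℝ}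
    (hu : IsSimple 𝒜 u) : ApproxSeq 𝒜 μ u (fun _ => u) := by
  refine ⟨fun _ => hu, ?_, ?_⟩
  · intro ε hε
    refine ⟨0, fun p _ q _ => ?_⟩
    have he : (fun x => |u x - u x|) = fun _ : Ω => (0:ℝ) := funext fun x => by simp
    rw [he, simpleInt_zero hA hμ]
    exact hε
  · intro ε hε
    have he : {x : Ω | ε ≤ |u x - u x|} = ∅ := by
      ext x; simp only [sub_self, abs_zero, mem_setOf_eq, mem_empty_iff_false, iff_false]
      linarith
    have : (fun _ : ℕ => outerOf 𝒜 μ {x : Ω | ε ≤ |u x - u x|}) = fun _ => (0:ℝ) := by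
      funext n; rw [he, outer_empty hA hμ hpos]
    rw [this]
    exact tendsto_const_nhds

theorem approx_abs (hA : IsAlg 𝒜) (hμ : IsFinAdd 𝒜 μ) (hpos : IsPos 𝒜 μ) {G : Ω → ℝ}
    {g : ℕ → Ω → ℝ} (hg : ApproxSeq 𝒜 μ G g) :
    ApproxSeq 𝒜 μ (fun x => |G x|) (fun n x => |g n x|) := by
  refine ⟨fun n => isSimple_op₂ hA (hg.1 n) (hg.1 n) (fun a b => |a|), ?_, ?_⟩
  · intro ε hε
    obtain ⟨N, hN⟩ := hg.2.1 ε hε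
    refine ⟨N, fun p hp q hq => ?_⟩
    have hptw : ∀ x, |(fun n x => |g n x|) p x - (fun n x => |g n x|) q x| ≤
        (fun x => |g p x - g q x|) x := fun x => abs_abs_sub_abs_le_abs_sub _ _
    have := simpleInt_mono hA hμ hpos
      (isSimple_op₂ hA (isSimple_op₂ hA (hg.1 p) (hg.1 p) (fun a b => |a|))
        (isSimple_op₂ hA (hg.1 q) (hg.1 q) (fun a b => |a|)) (fun a b => |a - b|))
      (isSimple_op₂ hA (hg.1 p) (hg.1 q) (fun a b => |a - b|)) hptw
    exact lt_of_le_of_lt this (hN p hp q hq)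
  · intro ε hε
    have hsub : ∀ n, {x | ε ≤ abs (abs (g n x) - abs (G x))} ⊆ {x | ε ≤ |g n x - G x|} := by
      intro n x hx
      simp only [mem_setOf_eq] at hx ⊢
      exact le_trans hx (abs_abs_sub_abs_le_abs_sub _ _)
    exact squeeze_zero (fun n => outer_nonneg hA hpos _)
      (fun n => outer_mono hA hpos (hsub n)) (hg.2.2 ε hε)

theorem approx_comb (hA : IsAlg 𝒜) (hμ : IsFinAdd 𝒜 μ) (hpos : IsPos 𝒜 μ)
    {f k : Ω → ℝ} {fg kg : ℕ → Ω → ℝ} (hfg : ApproxSeq 𝒜 μ f fg) (hkg : ApproxSeq 𝒜 μ k kg)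
    {s : Ω → ℝ} (hs : IsSimple 𝒜 s) {η : ℝ} (hη : 0 < η) :
    ApproxSeq 𝒜 μ (fun x => η * f x - k x + s x) (fun n x => η * fg n x - kg n x + s x) := by
  have hsimp : ∀ n, IsSimple 𝒜 (fun x => η * fg n x - kg n x + s x) := fun n =>
    isSimple_op₂ hA (isSimple_op₂ hA (hfg.1 n) (hkg.1 n) (fun a b => η * a - b)) hs
      (fun a b => a + b)
  refine ⟨hsimp, ?_, ?_⟩
  · intro ε hε
    obtain ⟨N₁, hN₁⟩ := hfg.2.1 (ε / (2 * (η + 1))) (by positivity)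
    obtain ⟨N₂, hN₂⟩ := hkg.2.1 (ε / 2) (by positivity)
    refine ⟨max N₁ N₂, fun p hp q hq => ?_⟩
    have hp₁ : p ≥ N₁ := le_trans (le_max_left _ _) hp
    have hp₂ : p ≥ N₂ := le_trans (le_max_right _ _) hp
    have hq₁ : q ≥ N₁ := le_trans (le_max_left _ _) hq
    have hq₂ : q ≥ N₂ := le_trans (le_max_right _ _) hq
    have h1 : IsSimple 𝒜 (fun x => η * |fg p x - fg q x|) :=
      isSimple_op₂ hA (hfg.1 p) (hfg.1 q) (fun a b => η * |a - b|)
    have h2 : IsSimple 𝒜 (fun x => |kg p x - kg q x|) :=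
      isSimple_op₂ hA (hkg.1 p) (hkg.1 q) (fun a b => |a - b|)
    have hptw : ∀ x, |(fun n x => η * fg n x - kg n x + s x) p x -
        (fun n x => η * fg n x - kg n x + s x) q x| ≤
        (fun x => η * |fg p x - fg q x|) x + (fun x => |kg p x - kg q x|) x := by
      intro x
      simp only []
      have he : (η * fg p x - kg p x + s x) - (η * fg q x - kg q x + s x) =
          η * (fg p x - fg q x) - (kg p x - kg q x) := by ring
      rw [he]
      calc |η * (fg p x - fg q x) - (kg p x - kg q x)| ≤
            |η * (fg p x - fg q x)| + |kg p x - kg q x| := abs_sub _ _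
        _ = η * |fg p x - fg q x| + |kg p x - kg q x| := by
            rw [abs_mul, abs_of_pos hη]
    have hmono := simpleInt_mono hA hμ hpos
      (isSimple_op₂ hA (hsimp p) (hsimp q) (fun a b => |a - b|))
      (isSimple_op₂ hA h1 h2 (fun a b => a + b)) hptw
    rw [simpleInt_add hA hμ h1 h2] at hmono
    have he1 : simpleInt μ (fun x => η * |fg p x - fg q x|) =
        η * simpleInt μ (fun x => |fg p x - fg q x|) :=
      simpleInt_smul hA hμ (isSimple_op₂ hA (hfg.1 p) (hfg.1 q) (fun a b => |a - b|)) η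
    rw [he1] at hmono
    have c1 := hN₁ p hp₁ q hq₁
    have c2 := hN₂ p hp₂ q hq₂
    have : η * simpleInt μ (fun x => |fg p x - fg q x|) ≤ η * (ε / (2 * (η + 1))) :=
      mul_le_mul_of_nonneg_left c1.le hη.le
    have hfrac : η * (ε / (2 * (η + 1))) < ε / 2 := by
      rw [mul_div_assoc', div_lt_div_iff₀ (by positivity) (by norm_num : (0:ℝ) < 2)]
      nlinarith
    linarith
  · intro ε hε
    have hsub : ∀ n, {x | ε ≤ |(fun x => η * fg n x - kg n x + s x) x -
        (fun x => η * f x - k x + s x) x|} ⊆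
        {x | ε / (2 * η) ≤ |fg n x - f x|} ∪ {x | ε / 2 ≤ |kg n x - k x|} := by
      intro n x hx
      simp only [mem_setOf_eq] at hx
      by_contra hcon
      simp only [mem_union, mem_setOf_eq, not_or, not_le] at hcon
      obtain ⟨h1, h2⟩ := hcon
      have he : (η * fg n x - kg n x + s x) - (η * f x - k x + s x) =
          η * (fg n x - f x) - (kg n x - k x) := by ring
      rw [he] at hx
      have hb : |η * (fg n x - f x) - (kg n x - k x)| ≤
          η * |fg n x - f x| + |kg n x - k x| := by
        calc |η * (fg n x - f x) - (kg n x - k x)| ≤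
              |η * (fg n x - f x)| + |kg n x - k x| := abs_sub _ _
          _ = η * |fg n x - f x| + |kg n x - k x| := by rw [abs_mul, abs_of_pos hη]
      have hb1 : η * |fg n x - f x| < η * (ε / (2 * η)) :=
        mul_lt_mul_of_pos_left h1 hη
      have hb2 : η * (ε / (2 * η)) = ε / 2 := by field_simp
      linarith
    have ht := ((hfg.2.2 (ε / (2 * η)) (by positivity)).add (hkg.2.2 (ε / 2) (by positivity)))
    refine squeeze_zero (fun n => outer_nonneg hA hpos _)
      (fun n => le_trans (outer_mono hA hpos (hsub n)) (outer_subadd hA hμ hpos _ _)) ?_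
    simpa using ht


/-- if `f ≥ 0` has positive integral, it is bounded below on a set of positive measure. -/
theorem exists_pos_set (hA : IsAlg 𝒜) (hμ : IsFinAdd 𝒜 μ) (hpos : IsPos 𝒜 μ) {f : Ω → ℝ}
    (hfL1 : MemL1 𝒜 μ f) (hf0 : ∀ x, 0 ≤ f x) (hI : 0 < dsInt 𝒜 μ f) :
    ∃ B ∈ 𝒜, ∃ δ' > (0:ℝ), 0 < μ B ∧ ∀ x ∈ B, δ' ≤ f x := by
  obtain ⟨g₀, hg₀⟩ := hfL1
  have hg : ApproxSeq 𝒜 μ f (fun n x => max (g₀ n x) 0) := approx_pos hA hμ hpos hf0 hg₀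
  set g : ℕ → Ω → ℝ := fun n x => max (g₀ n x) 0 with hgdef
  have hgnn : ∀ n x, 0 ≤ g n x := fun n x => le_max_right _ _
  obtain ⟨I, htI⟩ := approx_tendsto hA hμ hpos hg
  have hIeq : dsInt 𝒜 μ f = I := dsInt_eq hA hμ hpos hg htI
  rw [hIeq] at hI
  set T := μ Set.univ with hTdef
  have hT0 : 0 ≤ T := hpos _ hA.2.1
  set δ := I / (4 * (T + 1)) with hδdef
  have hδ0 : 0 < δ := by positivity
  set W := {x | δ / 2 ≤ f x} with hWdef
  -- N₃ : integrals eventually > I/2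
  have htI' := htI
  rw [Metric.tendsto_atTop] at htI'
  obtain ⟨N₃, hN₃⟩ := htI' (I / 2) (by positivity)
  have hbig : ∀ n ≥ N₃, I / 2 < simpleInt μ (g n) := by
    intro n hn
    have := hN₃ n hn
    rw [Real.dist_eq, abs_lt] at this
    linarith [this.1]
  -- outer measure of W is positive
  have hw₀ : 0 < outerOf 𝒜 μ W := by
    by_contra hW
    push_neg at hW
    obtain ⟨N₅, hN₅⟩ := hg.2.1 (I / 8) (by positivity)
    set n₁ := max N₃ N₅ with hn₁def
    set v₁ := g n₁ with hv₁def
    set M₁ := sSup (Set.range v₁) ⊔ 1 with hM₁def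
    have hM₁1 : (1:ℝ) ≤ M₁ := le_sup_right
    have hM₁0 : 0 < M₁ := lt_of_lt_of_le one_pos hM₁1
    have hM₁b : ∀ x, v₁ x ≤ M₁ := fun x =>
      le_trans (le_csSup (hg.1 n₁).1.bddAbove ⟨x, rfl⟩) le_sup_left
    set γ := I / (16 * (M₁ + 1)) with hγdef
    have hγ0 : 0 < γ := by positivity
    have hm := hg.2.2 (δ / 2) (by positivity)
    rw [Metric.tendsto_atTop] at hm
    obtain ⟨N₆, hN₆⟩ := hm γ hγ0
    set n := max n₁ N₆ with hndef
    have hn₃ : n ≥ N₃ := le_trans (le_max_left _ _) (le_max_left _ _)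
    have hn₅ : n ≥ N₅ := le_trans (le_max_right _ _) (le_max_left _ _)
    have hn₁₅ : n₁ ≥ N₅ := le_max_right _ _
    have hn₆ : n ≥ N₆ := le_max_right _ _
    -- set A ⊇ W with small measure
    obtain ⟨x₁, ⟨A, hAm, hWA, rfl⟩, hlA⟩ := exists_lt_of_csInf_lt
      (s := {x | ∃ A ∈ 𝒜, W ⊆ A ∧ x = μ A})
      ⟨μ Set.univ, Set.univ, hA.2.1, subset_univ _, rfl⟩
      (lt_of_le_of_lt hW hγ0)
    -- set A' ⊇ E with small measure
    have houtE : outerOf 𝒜 μ {x | δ / 2 ≤ |g n x - f x|} < γ := by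
      have := hN₆ n hn₆
      rwa [Real.dist_eq, sub_zero, abs_of_nonneg (outer_nonneg hA hpos _)] at this
    obtain ⟨x₂, ⟨A', hA'm, hEA', rfl⟩, hlA'⟩ := exists_lt_of_csInf_lt
      (s := {x | ∃ B ∈ 𝒜, {x | δ / 2 ≤ |g n x - f x|} ⊆ B ∧ x = μ B})
      ⟨μ Set.univ, Set.univ, hA.2.1, subset_univ _, rfl⟩ houtE
    have hAA'm : A ∪ A' ∈ 𝒜 := hA.2.2.2 _ hAm _ hA'm
    -- pointwise bound
    set u3 : Ω → ℝ := Set.indicator (A ∪ A') (fun _ => M₁) with hu3def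
    have hu3s : IsSimple 𝒜 u3 := isSimple_indicator hA hAA'm M₁
    have hu1s : IsSimple 𝒜 (fun _ : Ω => δ) := isSimple_const hA δ
    have hu13s : IsSimple 𝒜 (fun x => δ + u3 x) := isSimple_op₂ hA hu1s hu3s (fun a b => a + b)
    have hu4s : IsSimple 𝒜 (fun x => |g n x - v₁ x|) :=
      isSimple_op₂ hA (hg.1 n) (hg.1 n₁) (fun a b => |a - b|)
    have hptw : ∀ x, g n x ≤ (fun x => δ + u3 x) x + (fun x => |g n x - v₁ x|) x := by
      intro x
      by_cases hx : x ∈ A ∪ A'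
      · have h3 : u3 x = M₁ := by rw [hu3def, Set.indicator_of_mem hx]
        simp only [h3]
        have : g n x - v₁ x ≤ |g n x - v₁ x| := le_abs_self _
        have := hM₁b x
        linarith [hδ0.le]
      · have hxW : x ∉ W := fun hW' => hx (Or.inl (hWA hW'))
        have hxE : x ∉ {x | δ / 2 ≤ |g n x - f x|} := fun hE' => hx (Or.inr (hEA' hE'))
        simp only [hWdef, mem_setOf_eq, not_le] at hxW
        simp only [mem_setOf_eq, not_le] at hxE
        have h3 : u3 x = 0 := by rw [hu3def, Set.indicator_of_notMem hx]
        simp only [h3]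
        have h5 : g n x - f x ≤ |g n x - f x| := le_abs_self _
        have h6 : (0:ℝ) ≤ |g n x - v₁ x| := abs_nonneg _
        linarith
    have hint := simpleInt_mono hA hμ hpos (hg.1 n)
      (isSimple_op₂ hA hu13s hu4s (fun a b => a + b)) hptw
    rw [simpleInt_add hA hμ hu13s hu4s, simpleInt_add hA hμ hu1s hu3s,
      simpleInt_const hA hμ δ] at hint
    have hi3 : simpleInt μ u3 ≤ M₁ * (μ A + μ A') := by
      rw [hu3def, simpleInt_indicator hμ M₁ (ne_of_gt hM₁0)]
      have := subadd_of_finAdd hA hμ hpos hAm hA'm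
      nlinarith
    have hi4 : simpleInt μ (fun x => |g n x - v₁ x|) < I / 8 := hN₅ n hn₅ n₁ hn₁₅
    have hδT : δ * T ≤ I / 4 := by
      rw [hδdef, div_mul_eq_mul_div, div_le_div_iff₀ (by positivity) (by norm_num : (0:ℝ) < 4)]
      nlinarith
    have hμAs : M₁ * (μ A + μ A') < M₁ * (2 * γ) := by
      have := mul_lt_mul_of_pos_left (by linarith : μ A + μ A' < 2 * γ) hM₁0
      linarith
    have hγM : M₁ * (2 * γ) ≤ I / 8 := by
      have h8 : (0:ℝ) < M₁ + 1 := by linarith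
      have heq2 : M₁ * (2 * γ) = (M₁ / (M₁ + 1)) * (I / 8) := by
        rw [hγdef]; field_simp; ring
      rw [heq2]
      have hle : M₁ / (M₁ + 1) ≤ 1 := by rw [div_le_one h8]; linarith
      nlinarith [hI.le, hle, mul_le_mul_of_nonneg_right hle (by positivity : (0:ℝ) ≤ I / 8)]
    have hbign := hbig n hn₃
    linarith
  -- extract the set B
  set w₀ := outerOf 𝒜 μ W with hw₀def
  obtain ⟨hsimp', hcauchy', hmeas'⟩ := hg
  have hm := hmeas' (δ / 8) (by positivity)
  rw [Metric.tendsto_atTop] at hm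
  obtain ⟨N₇, hN₇⟩ := hm (w₀ / 4) (by positivity)
  set v₂ := g N₇ with hv₂def
  have houtE' : outerOf 𝒜 μ {x | δ / 8 ≤ |v₂ x - f x|} < w₀ / 4 := by
    have := hN₇ N₇ (le_refl _)
    rwa [Real.dist_eq, sub_zero, abs_of_nonneg (outer_nonneg hA hpos _)] at this
  obtain ⟨x₂, ⟨A', hA'm, hEA', rfl⟩, hlA'⟩ := exists_lt_of_csInf_lt
    (s := {x | ∃ B ∈ 𝒜, {x | δ / 8 ≤ |v₂ x - f x|} ⊆ B ∧ x = μ B})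
    ⟨μ Set.univ, Set.univ, hA.2.1, subset_univ _, rfl⟩ houtE'
  set S₀ := v₂ ⁻¹' (Set.Ici (δ / 4)) with hS₀def
  have hS₀m : S₀ ∈ 𝒜 := isSimple_preimage hA (hsimp' N₇) _
  have hWsub : W ⊆ S₀ ∪ A' := by
    intro x hxW
    by_cases hx : x ∈ A'
    · exact Or.inr hx
    · left
      have hxE : ¬ (δ / 8 ≤ |v₂ x - f x|) := fun h => hx (hEA' h)
      push_neg at hxE
      have hfx : δ / 2 ≤ f x := hxW
      have : f x - v₂ x ≤ |v₂ x - f x| := by rw [abs_sub_comm]; exact le_abs_self _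
      simp only [hS₀def, mem_preimage, mem_Ici]
      linarith
  have hlS₀ : 3 * w₀ / 4 ≤ μ S₀ := by
    have h1 : w₀ ≤ outerOf 𝒜 μ (S₀ ∪ A') := outer_mono hA hpos hWsub
    have h2 : outerOf 𝒜 μ (S₀ ∪ A') ≤ μ (S₀ ∪ A') :=
      outer_le hA hpos (hA.2.2.2 _ hS₀m _ hA'm) (subset_refl _)
    have h3 : μ (S₀ ∪ A') ≤ μ S₀ + μ A' := subadd_of_finAdd hA hμ hpos hS₀m hA'm
    linarith
  refine ⟨S₀ \ A', alg_diff hA hS₀m hA'm, δ / 8, by positivity, ?_, ?_⟩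
  · have h4 : μ S₀ ≤ μ (S₀ \ A') + μ A' := by
      have hsub : S₀ ⊆ (S₀ \ A') ∪ A' := fun x hx => by
        by_cases h : x ∈ A'
        · exact Or.inr h
        · exact Or.inl ⟨hx, h⟩
      calc μ S₀ ≤ μ ((S₀ \ A') ∪ A') :=
            mono_of_finAdd hA hμ hpos hS₀m
              (hA.2.2.2 _ (alg_diff hA hS₀m hA'm) _ hA'm) hsub
        _ ≤ μ (S₀ \ A') + μ A' := subadd_of_finAdd hA hμ hpos (alg_diff hA hS₀m hA'm) hA'm
    linarith
  · intro x hx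
    obtain ⟨hxS, hxA'⟩ := hx
    have hv₂x : δ / 4 ≤ v₂ x := hxS
    have hxE : ¬ (δ / 8 ≤ |v₂ x - f x|) := fun h => hxA' (hEA' h)
    push_neg at hxE
    have : v₂ x - f x ≤ |v₂ x - f x| := le_abs_self _
    linarith

end YanAux
end Aux

/-- Yan, (iii) ⇒ (i). -/
theorem yan_iii_i {Ω : Type*} (𝒜 : Set (Set Ω)) (hA : IsAlg 𝒜)
    (l : Set Ω → ℝ) (hl : IsFinAdd 𝒜 l) (hpos : IsPos 𝒜 l)
    (K : Set (Ω → ℝ)) (hK1 : ∀ f ∈ K, MemL1 𝒜 l f)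
    (hconv : ∀ f ∈ K, ∀ g ∈ K, ∀ t : ℝ, 0 ≤ t → t ≤ 1 →
      (fun x => t * f x + (1 - t) * g x) ∈ K)
    (h0 : (fun _ => (0:ℝ)) ∈ K)
    (P : Set Ω → ℝ) (hP : IsFinAdd 𝒜 P) (hPpos : IsPos 𝒜 P) (hP1 : P Set.univ = 1)
    (hKP : ∀ k ∈ K, MemL1 𝒜 P k)
    (hb : ∃ c : ℝ, ∀ k ∈ K, dsInt 𝒜 P k ≤ c)
    (hr : ∃ c : ℝ, ∀ A ∈ 𝒜, 0 < l A → P A ≤ c * l A)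
    (heq : ∀ A ∈ 𝒜, (P A = 0 ↔ l A = 0)) :
    ∀ f : Ω → ℝ, MemL1 𝒜 l f → (∀ x, 0 ≤ f x) → 0 < dsInt 𝒜 l f →
      ∃ η > (0:ℝ), ¬ InL1Closure 𝒜 l (ConeDiff 𝒜 K) (fun x => η * f x) := by
  classical
  obtain ⟨cr, hcr⟩ := hr
  obtain ⟨cb, hcb⟩ := hb
  set c' := max cr 1 with hc'def
  have hc'1 : (1:ℝ) ≤ c' := le_max_right _ _
  have hc'0 : (0:ℝ) < c' := lt_of_lt_of_le one_pos hc'1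
  have hcomp : ∀ A ∈ 𝒜, P A ≤ c' * l A := by
    intro A hAm
    rcases lt_or_ge 0 (l A) with hlApos | hlAle
    · calc P A ≤ cr * l A := hcr A hAm hlApos
        _ ≤ c' * l A := mul_le_mul_of_nonneg_right (le_max_left _ _) (hpos A hAm)
    · have h0' : l A = 0 := le_antisymm hlAle (hpos A hAm)
      rw [h0', mul_zero, (heq A hAm).mpr h0']
  intro f hfL1 hf0 hIf
  -- Step 1: a positive-measure set where f is bounded below
  obtain ⟨B, hBm, δ', hδ'0, hlB, hδ'f⟩ := YanAux.exists_pos_set hA hl hpos hfL1 hf0 hIf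
  have hPB : 0 < P B := by
    rcases lt_or_eq_of_le (hPpos B hBm) with h | h
    · exact h
    · exfalso
      have := (heq B hBm).mp h.symm
      rw [this] at hlB
      exact lt_irrefl 0 hlB
  set γ := δ' * P B with hγdef
  have hγ0 : 0 < γ := mul_pos hδ'0 hPB
  -- the P-integral of f
  obtain ⟨fg, hfg⟩ := hfL1
  have hfgP : ApproxSeq 𝒜 P f fg :=
    YanAux.approx_transfer hA hl hpos hP hPpos hc'0.le hcomp hfg
  obtain ⟨Lf, htLf⟩ := YanAux.approx_tendsto hA hP hPpos hfgP
  -- lower bound for Lf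
  have hγLf : γ ≤ Lf := by
    have hind : IsSimple 𝒜 (Set.indicator B (fun _ => δ')) := YanAux.isSimple_indicator hA hBm δ'
    have hbconst : ApproxSeq 𝒜 P (Set.indicator B (fun _ => δ'))
        (fun _ => Set.indicator B (fun _ => δ')) := YanAux.approx_const hA hP hPpos hind
    have hptwBf : ∀ x, Set.indicator B (fun _ => δ') x ≤ f x := by
      intro x
      by_cases hx : x ∈ B
      · rw [Set.indicator_of_mem hx]; exact hδ'f x hx
      · rw [Set.indicator_of_notMem hx]; exact hf0 x
    have hle := YanAux.lim_mono hA hP hPpos hptwBf hfgP hbconst htLf tendsto_const_nhds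
    rwa [YanAux.simpleInt_indicator hP δ' (ne_of_gt hδ'0)] at hle
  -- choice of η
  set η := max ((cb + 1) / γ) 1 with hηdef
  have hη1 : (1:ℝ) ≤ η := le_max_right _ _
  have hη0 : (0:ℝ) < η := lt_of_lt_of_le one_pos hη1
  have hηγ : cb + 1 ≤ η * γ := by
    have h1 : (cb + 1) / γ ≤ η := le_max_left _ _
    have h2 : ((cb + 1) / γ) * γ ≤ η * γ := mul_le_mul_of_nonneg_right h1 hγ0.le
    rwa [div_mul_cancel₀ _ (ne_of_gt hγ0)] at h2
  refine ⟨η, hη0, ?_⟩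
  intro hcl
  obtain ⟨h, ⟨k, hkK, s, hss, hs0, hks⟩, hdist⟩ := hcl (1 / c') (by positivity)
  -- approx sequences for k
  obtain ⟨kg, hkg⟩ := hK1 k hkK
  -- the combined sequences
  have hGl : ApproxSeq 𝒜 l (fun x => η * f x - k x + s x)
      (fun n x => η * fg n x - kg n x + s x) :=
    YanAux.approx_comb hA hl hpos hfg hkg hss hη0
  have hFl : ApproxSeq 𝒜 l (fun x => |η * f x - k x + s x|)
      (fun n x => |η * fg n x - kg n x + s x|) := YanAux.approx_abs hA hl hpos hGl
  obtain ⟨IF, htIF⟩ := YanAux.approx_tendsto hA hl hpos hFl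
  -- identify with the l1 distance
  have hks' : ∀ x, h x = k x - s x := fun x => by rw [hks]; rfl
  have hFeq : (fun x => |η * f x - k x + s x|) =
      (fun x => |(fun x : Ω => η * f x) x - h x|) := by
    funext x
    rw [hks' x]
    congr 1
    ring
  have hFl' : ApproxSeq 𝒜 l (fun x => |(fun x : Ω => η * f x) x - h x|)
      (fun n x => |η * fg n x - kg n x + s x|) := hFeq ▸ hFl
  have hdsF : dsInt 𝒜 l (fun x => |(fun x : Ω => η * f x) x - h x|) = IF :=
    YanAux.dsInt_eq hA hl hpos hFl' htIF
  have hdistIF : IF < 1 / c' := by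
    have : l1dist 𝒜 l (fun x => η * f x) h =
        dsInt 𝒜 l (fun x => |(fun x : Ω => η * f x) x - h x|) := rfl
    rw [this, hdsF] at hdist
    exact hdist
  -- transfer to P
  have hGP : ApproxSeq 𝒜 P (fun x => η * f x - k x + s x)
      (fun n x => η * fg n x - kg n x + s x) :=
    YanAux.approx_transfer hA hl hpos hP hPpos hc'0.le hcomp hGl
  have hFP : ApproxSeq 𝒜 P (fun x => |η * f x - k x + s x|)
      (fun n x => |η * fg n x - kg n x + s x|) := YanAux.approx_abs hA hP hPpos hGP
  obtain ⟨J, htJ⟩ := YanAux.approx_tendsto hA hP hPpos hFP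
  obtain ⟨La, htLa⟩ := YanAux.approx_tendsto hA hP hPpos hGP
  -- (1) IF ≥ (1/c') * J
  have h1 : (1 / c') * J ≤ IF := by
    refine le_of_tendsto_of_tendsto' (htJ.const_mul (1 / c')) htIF fun n => ?_
    have hcomp' := YanAux.simpleInt_comp hA hl hP hc'0.le hcomp
      (hFl.1 n) (fun x => abs_nonneg _)
    rw [div_mul_eq_mul_div, one_mul, div_le_iff₀ hc'0]
    calc simpleInt P ((fun n x => |η * fg n x - kg n x + s x|) n) ≤
        c' * simpleInt l ((fun n x => |η * fg n x - kg n x + s x|) n) := hcomp'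
      _ = simpleInt l ((fun n x => |η * fg n x - kg n x + s x|) n) * c' := by ring
  -- (2) J ≥ La
  have h2 : La ≤ J :=
    YanAux.lim_mono hA hP hPpos (fun x => le_abs_self _) hFP hGP htJ htLa
  -- (3) La = η * Lf - Lk + ∫ s
  obtain ⟨Lk, htLk⟩ := YanAux.approx_tendsto hA hP hPpos
    (YanAux.approx_transfer hA hl hpos hP hPpos hc'0.le hcomp hkg)
  have hLkcb : Lk ≤ cb := by
    have := YanAux.dsInt_eq hA hP hPpos
      (YanAux.approx_transfer hA hl hpos hP hPpos hc'0.le hcomp hkg) htLk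
    rw [← this]
    exact hcb k hkK
  have hint_n : ∀ n, simpleInt P ((fun n x => η * fg n x - kg n x + s x) n) =
      η * simpleInt P (fg n) - simpleInt P (kg n) + simpleInt P s := by
    intro n
    have t1s : IsSimple 𝒜 (fun x => η * fg n x - kg n x) :=
      YanAux.isSimple_op₂ hA (hfg.1 n) (hkg.1 n) (fun a b => η * a - b)
    have e1 : simpleInt P ((fun n x => η * fg n x - kg n x + s x) n) =
        simpleInt P (fun x => η * fg n x - kg n x) + simpleInt P s :=
      YanAux.simpleInt_add hA hP t1s hss
    have e2 : simpleInt P (fun x => η * fg n x - kg n x) =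
        simpleInt P (fun x => η * fg n x) - simpleInt P (kg n) :=
      YanAux.simpleInt_sub hA hP
        (YanAux.isSimple_op₂ hA (hfg.1 n) (hfg.1 n) (fun a b => η * a)) (hkg.1 n)
    have e3 : simpleInt P (fun x => η * fg n x) = η * simpleInt P (fg n) :=
      YanAux.simpleInt_smul hA hP (hfg.1 n) η
    rw [e1, e2, e3]
  have htRHS : Tendsto (fun n => η * simpleInt P (fg n) - simpleInt P (kg n) + simpleInt P s)
      atTop (𝓝 (η * Lf - Lk + simpleInt P s)) :=
    ((htLf.const_mul η).sub htLk).add tendsto_const_nhds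
  have hLa_eq : La = η * Lf - Lk + simpleInt P s := by
    refine tendsto_nhds_unique htLa ?_
    have : (fun n => simpleInt P ((fun n x => η * fg n x - kg n x + s x) n)) =
        fun n => η * simpleInt P (fg n) - simpleInt P (kg n) + simpleInt P s :=
      funext hint_n
    rw [this]
    exact htRHS
  -- conclude
  have hSP : 0 ≤ simpleInt P s := YanAux.simpleInt_nonneg hA hP hPpos hss hs0
  have hηLf : η * γ ≤ η * Lf := mul_le_mul_of_nonneg_left hγLf hη0.le
  have hLa1 : 1 ≤ La := by rw [hLa_eq]; linarith
  have hJ1 : 1 ≤ J := le_trans hLa1 h2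
  have hfinal : 1 / c' ≤ IF := by
    calc 1 / c' = (1 / c') * 1 := by ring
      _ ≤ (1 / c') * J := mul_le_mul_of_nonneg_left hJ1 (by positivity)
      _ ≤ IF := h1
  linarith
end

section
/- (Finitely additive Mukherjee–Summers lemma) Let A be an algebra of subsets of Ω and λ ∈ ba(A)₊ having at least one λ-atom. Then there exists a countable pairwise disjoint collection G₁, G₂, ... of λ-atoms in A such that for every λ-atom B ∈ A there exists n with λ(B Δ Gₙ) = 0. -/
open Set Filter Topology

variable {Ω : Type*}

section MShelpers
variable {𝒜 : Set (Set Ω)} {l : Set Ω → ℝ}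

lemma MS.compl_mem (hA : IsAlg 𝒜) {A : Set Ω} (h : A ∈ 𝒜) : Aᶜ ∈ 𝒜 := hA.2.2.1 A h

lemma MS.union_mem (hA : IsAlg 𝒜) {A B : Set Ω} (h : A ∈ 𝒜) (h' : B ∈ 𝒜) : A ∪ B ∈ 𝒜 :=
  hA.2.2.2 A h B h'

lemma MS.inter_mem (hA : IsAlg 𝒜) {A B : Set Ω} (h : A ∈ 𝒜) (h' : B ∈ 𝒜) : A ∩ B ∈ 𝒜 := by
  have := MS.compl_mem hA (MS.union_mem hA (MS.compl_mem hA h) (MS.compl_mem hA h'))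
  simpa [Set.compl_union] using this

lemma MS.diff_mem (hA : IsAlg 𝒜) {A B : Set Ω} (h : A ∈ 𝒜) (h' : B ∈ 𝒜) : A \ B ∈ 𝒜 := by
  have := MS.inter_mem hA h (MS.compl_mem hA h')
  simpa [Set.diff_eq] using this

lemma MS.union_eq (hA : IsAlg 𝒜) (hl : IsFinAdd 𝒜 l) {A B : Set Ω} (h : A ∈ 𝒜) (h' : B ∈ 𝒜) :
    l (A ∪ B) = l A + l (B \ A) := by
  have := hl.2.1 A h (B \ A) (MS.diff_mem hA h' h) disjoint_sdiff_self_right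
  rwa [Set.union_diff_self] at this

lemma MS.mono (hA : IsAlg 𝒜) (hl : IsFinAdd 𝒜 l) (hpos : IsPos 𝒜 l) {A B : Set Ω}
    (h : A ∈ 𝒜) (h' : B ∈ 𝒜) (hsub : A ⊆ B) : l A ≤ l B := by
  have e := MS.union_eq hA hl h h'
  rw [Set.union_eq_self_of_subset_left hsub] at e
  have := hpos _ (MS.diff_mem hA h' h)
  linarith

lemma MS.subadd (hA : IsAlg 𝒜) (hl : IsFinAdd 𝒜 l) (hpos : IsPos 𝒜 l) {A B : Set Ω}
    (h : A ∈ 𝒜) (h' : B ∈ 𝒜) : l (A ∪ B) ≤ l A + l B := by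
  rw [MS.union_eq hA hl h h']
  have := MS.mono hA hl hpos (MS.diff_mem hA h' h) h' Set.diff_subset
  linarith

lemma MS.split (hA : IsAlg 𝒜) (hl : IsFinAdd 𝒜 l) {A B : Set Ω}
    (h : A ∈ 𝒜) (h' : B ∈ 𝒜) : l A = l (A ∩ B) + l (A \ B) := by
  have hd : Disjoint (A ∩ B) (A \ B) := by
    refine Set.disjoint_left.2 ?_
    rintro x ⟨hxA, hxB⟩ ⟨-, hxB'⟩
    exact hxB' hxB
  have := hl.2.1 _ (MS.inter_mem hA h h') _ (MS.diff_mem hA h h') hd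
  rwa [Set.inter_union_diff] at this

lemma MS.sup_mem (hA : IsAlg 𝒜) {ι : Type*} (F : Finset ι) (g : ι → Set Ω)
    (hg : ∀ i ∈ F, g i ∈ 𝒜) : F.sup g ∈ 𝒜 := by
  classical
  induction F using Finset.induction_on with
  | empty => simpa using hA.1
  | @insert b s hb ih =>
    rw [Finset.sup_insert]
    exact MS.union_mem hA (hg b (Finset.mem_insert_self _ _))
      (ih fun i hi => hg i (Finset.mem_insert_of_mem hi))

lemma MS.inter_sup (hA : IsAlg 𝒜) (hl : IsFinAdd 𝒜 l) (hpos : IsPos 𝒜 l)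
    {ι : Type*} (F : Finset ι) (g : ι → Set Ω) {a : Set Ω} (ha : a ∈ 𝒜)
    (hg : ∀ i ∈ F, g i ∈ 𝒜) : l (a ∩ F.sup g) ≤ ∑ i ∈ F, l (a ∩ g i) := by
  classical
  induction F using Finset.induction_on with
  | empty => simp [hl.1]
  | @insert b s hb ih =>
    have h1 : a ∩ (insert b s).sup g = (a ∩ g b) ∪ (a ∩ s.sup g) := by
      rw [Finset.sup_insert]
      exact Set.inter_union_distrib_left a (g b) (s.sup g)
    have hgs : ∀ i ∈ s, g i ∈ 𝒜 := fun i hi => hg i (Finset.mem_insert_of_mem hi)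
    rw [h1, Finset.sum_insert hb]
    have hs := MS.subadd hA hl hpos (MS.inter_mem hA ha (hg b (Finset.mem_insert_self _ _)))
      (MS.inter_mem hA ha (MS.sup_mem hA s g hgs))
    have := ih hgs
    linarith

lemma MS.sum_le_sup (hA : IsAlg 𝒜) (hl : IsFinAdd 𝒜 l) (hpos : IsPos 𝒜 l)
    {ι : Type*} (F : Finset ι) (g : ι → Set Ω) (hg : ∀ i ∈ F, g i ∈ 𝒜)
    (hd : ∀ i ∈ F, ∀ j ∈ F, i ≠ j → l (g i ∩ g j) = 0) :
    (∑ i ∈ F, l (g i)) ≤ l (F.sup g) := by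
  classical
  induction F using Finset.induction_on with
  | empty => simp [hl.1]
  | @insert b s hb ih =>
    have hgs : ∀ i ∈ s, g i ∈ 𝒜 := fun i hi => hg i (Finset.mem_insert_of_mem hi)
    have hbm : g b ∈ 𝒜 := hg b (Finset.mem_insert_self _ _)
    have hSm : s.sup g ∈ 𝒜 := MS.sup_mem hA s g hgs
    have key : l (g b ∩ s.sup g) = 0 := by
      have h1 := MS.inter_sup hA hl hpos s g hbm hgs
      have h2 : ∑ i ∈ s, l (g b ∩ g i) = 0 := Finset.sum_eq_zero fun i hi =>
        hd b (Finset.mem_insert_self _ _) i (Finset.mem_insert_of_mem hi)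
          (fun h => hb (h ▸ hi))
      have h3 := hpos _ (MS.inter_mem hA hbm hSm)
      linarith
    have e : l (g b ∪ s.sup g) = l (g b) + l (s.sup g \ g b) := MS.union_eq hA hl hbm hSm
    have e2 : l (s.sup g) = l (s.sup g ∩ g b) + l (s.sup g \ g b) := MS.split hA hl hSm hbm
    have e3 : l (s.sup g ∩ g b) = 0 := by rwa [Set.inter_comm] at key
    have ih' := ih hgs (fun i hi j hj hij =>
      hd i (Finset.mem_insert_of_mem hi) j (Finset.mem_insert_of_mem hj) hij)
    rw [Finset.sum_insert hb, Finset.sup_insert]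
    show l (g b) + ∑ i ∈ s, l (g i) ≤ l (g b ∪ s.sup g)
    linarith

def MS.eqv (l : Set Ω → ℝ) (B B' : Set Ω) : Prop := l (B \ B') = 0 ∧ l (B' \ B) = 0

lemma MS.diff_null (hA : IsAlg 𝒜) (hl : IsFinAdd 𝒜 l) (hpos : IsPos 𝒜 l) {A B C : Set Ω}
    (hAm : A ∈ 𝒜) (hBm : B ∈ 𝒜) (hCm : C ∈ 𝒜)
    (h1 : l (A \ B) = 0) (h2 : l (B \ C) = 0) : l (A \ C) = 0 := by
  have hsub : A \ C ⊆ (A \ B) ∪ (B \ C) := by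
    rintro x ⟨hx, hxC⟩
    by_cases hxB : x ∈ B
    · exact Or.inr ⟨hxB, hxC⟩
    · exact Or.inl ⟨hx, hxB⟩
  have hm1 := MS.diff_mem hA hAm hBm
  have hm2 := MS.diff_mem hA hBm hCm
  have hle := MS.mono hA hl hpos (MS.diff_mem hA hAm hCm) (MS.union_mem hA hm1 hm2) hsub
  have hsb := MS.subadd hA hl hpos hm1 hm2
  have := hpos _ (MS.diff_mem hA hAm hCm)
  linarith

lemma MS.eqv_trans (hA : IsAlg 𝒜) (hl : IsFinAdd 𝒜 l) (hpos : IsPos 𝒜 l) {A B C : Set Ω}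
    (hAm : A ∈ 𝒜) (hBm : B ∈ 𝒜) (hCm : C ∈ 𝒜)
    (h1 : MS.eqv l A B) (h2 : MS.eqv l B C) : MS.eqv l A C :=
  ⟨MS.diff_null hA hl hpos hAm hBm hCm h1.1 h2.1,
   MS.diff_null hA hl hpos hCm hBm hAm h2.2 h1.2⟩

lemma MS.dichotomy (hA : IsAlg 𝒜) (hl : IsFinAdd 𝒜 l) (hpos : IsPos 𝒜 l) {B B' : Set Ω}
    (hB : IsLAtom 𝒜 l B) (hB' : IsLAtom 𝒜 l B') :
    l (B ∩ B') = 0 ∨ MS.eqv l B B' := by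
  have hm : B ∩ B' ∈ 𝒜 := MS.inter_mem hA hB.1 hB'.1
  rcases hB.2.2 _ hm Set.inter_subset_left with h | h
  · exact Or.inl h
  rcases hB'.2.2 _ hm Set.inter_subset_right with h' | h'
  · exact Or.inl h'
  · right
    constructor
    · have e : B \ (B ∩ B') = B \ B' := by ext x; simp [Set.mem_diff]
      rwa [e] at h
    · have e : B' \ (B ∩ B') = B' \ B := by ext x; simp [Set.mem_diff]
      rwa [e] at h'

end MShelpers


/-- Mukherjee–Summers: countable disjoint family of atoms
exhausting all atoms up to λ-null symmetric difference. -/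
theorem mukherjee_summers {Ω : Type*} (𝒜 : Set (Set Ω)) (hA : IsAlg 𝒜)
    (l : Set Ω → ℝ) (hl : IsFinAdd 𝒜 l) (hpos : IsPos 𝒜 l)
    (hatom : ∃ B, IsLAtom 𝒜 l B) :
    ∃ G : Set (Set Ω), G.Countable ∧ (∀ g ∈ G, IsLAtom 𝒜 l g) ∧
      G.Pairwise Disjoint ∧
      ∀ B : Set Ω, IsLAtom 𝒜 l B → ∃ g ∈ G, l (symmDiff B g) = 0 := by
  classical
  obtain ⟨C, hC⟩ := hl.2.2
  set P : Set (Set (Set Ω)) :=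
    {S | (∀ B ∈ S, IsLAtom 𝒜 l B) ∧ S.Pairwise fun B B' => ¬ MS.eqv l B B'} with hP
  have hsymm : Symmetric fun B B' : Set Ω => ¬ MS.eqv l B B' :=
    fun x y h he => h ⟨he.2, he.1⟩
  have hchain : ∀ c ⊆ P, IsChain (· ⊆ ·) c → ∃ ub ∈ P, ∀ s ∈ c, s ⊆ ub := by
    intro c hc hch
    refine ⟨⋃₀ c, ⟨?_, ?_⟩, fun s hs => Set.subset_sUnion_of_mem hs⟩
    · rintro B ⟨s, hs, hBs⟩
      exact (hc hs).1 B hBs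
    · rintro x ⟨s, hs, hxs⟩ y ⟨t, ht, hyt⟩ hxy
      rcases hch.total hs ht with hst | hts
      · exact (hc ht).2 (hst hxs) hyt hxy
      · exact (hc hs).2 hxs (hts hyt) hxy
  obtain ⟨M, hM⟩ := zorn_subset P hchain
  have hMatom : ∀ B ∈ M, IsLAtom 𝒜 l B := hM.1.1
  have hMpw : M.Pairwise fun B B' => ¬ MS.eqv l B B' := hM.1.2
  have hcover : ∀ B, IsLAtom 𝒜 l B → ∃ m ∈ M, MS.eqv l B m := by
    intro B hB
    by_contra hcon
    push_neg at hcon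
    have hBM : B ∉ M := fun h => hcon B h ⟨by simp [hl.1], by simp [hl.1]⟩
    have hins : insert B M ∈ P := by
      refine ⟨?_, ?_⟩
      · rintro B' hB'
        rcases Set.mem_insert_iff.1 hB' with rfl | h
        · exact hB
        · exact hMatom B' h
      · rw [Set.pairwise_insert]
        exact ⟨hMpw, fun b hb _ => ⟨hcon b hb, hsymm (hcon b hb)⟩⟩
    exact hBM (hM.2 hins (Set.subset_insert B M) (Set.mem_insert B M))
  have hC0 : ∀ t : Finset (Set Ω), ↑t ⊆ M → ∑ B ∈ t, l B ≤ C := by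
    intro t ht
    have hg : ∀ B ∈ t, B ∈ 𝒜 := fun B hB => (hMatom B (ht hB)).1
    have hd : ∀ B ∈ t, ∀ B' ∈ t, B ≠ B' → l (B ∩ B') = 0 := by
      intro B hB B' hB' hne
      rcases MS.dichotomy hA hl hpos (hMatom B (ht hB)) (hMatom B' (ht hB')) with h | h
      · exact h
      · exact absurd h (hMpw (ht hB) (ht hB') hne)
    calc ∑ B ∈ t, l B ≤ l (t.sup id) := by
          simpa using MS.sum_le_sup hA hl hpos t id hg hd
      _ ≤ |l (t.sup id)| := le_abs_self _
      _ ≤ C := hC _ (MS.sup_mem hA t id hg)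
  have hfin : ∀ n : ℕ, (M ∩ {B | 1 / ((n : ℝ) + 1) ≤ l B}).Finite := by
    intro n
    by_contra hinf
    obtain ⟨N, hN⟩ := exists_nat_gt (C * ((n : ℝ) + 1))
    obtain ⟨t, hts, hcard⟩ := Set.Infinite.exists_subset_card_eq hinf N
    have hn1 : (0 : ℝ) < (n : ℝ) + 1 := by positivity
    have h1 : (N : ℝ) * (1 / ((n : ℝ) + 1)) ≤ ∑ B ∈ t, l B := by
      have := Finset.card_nsmul_le_sum t l (1 / ((n : ℝ) + 1))
        (fun B hB => (hts hB).2)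
      simpa [hcard, nsmul_eq_mul] using this
    have h2 := hC0 t fun B hB => (hts hB).1
    have hinv : (1 / ((n : ℝ) + 1)) * ((n : ℝ) + 1) = 1 :=
      one_div_mul_cancel (ne_of_gt hn1)
    nlinarith [mul_le_mul_of_nonneg_right (h1.trans h2) hn1.le]
  have hMc : M.Countable := by
    have hsub : M ⊆ ⋃ n : ℕ, M ∩ {B | 1 / ((n : ℝ) + 1) ≤ l B} := by
      intro B hB
      obtain ⟨n, hn⟩ := exists_nat_one_div_lt (hMatom B hB).2.1
      exact Set.mem_iUnion.2 ⟨n, hB, le_of_lt hn⟩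
    exact (Set.countable_iUnion fun n => (hfin n).countable).mono hsub
  obtain ⟨B0, hB0⟩ := hatom
  obtain ⟨m0, hm0, -⟩ := hcover B0 hB0
  obtain ⟨f, hf⟩ := hMc.exists_eq_range ⟨m0, hm0⟩
  have hfM : ∀ n, f n ∈ M := fun n => hf ▸ Set.mem_range_self n
  have hfat : ∀ n, IsLAtom 𝒜 l (f n) := fun n => hMatom _ (hfM n)
  set D : ℕ → Set Ω := fun n => f n \ (Finset.range n).sup f with hD
  have hDmem : ∀ n, D n ∈ 𝒜 := fun n =>
    MS.diff_mem hA (hfat n).1 (MS.sup_mem hA _ f fun i _ => (hfat i).1)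
  have hDsub : ∀ n, D n ⊆ f n := fun n => Set.diff_subset
  refine ⟨D '' {n | 0 < l (D n)}, (Set.to_countable _).image D, ?_, ?_, ?_⟩
  · rintro g ⟨n, hn, rfl⟩
    refine ⟨hDmem n, hn, fun A hAm hsub => ?_⟩
    rcases (hfat n).2.2 A hAm (hsub.trans (hDsub n)) with h | h
    · exact Or.inl h
    · right
      have hle := MS.mono hA hl hpos (MS.diff_mem hA (hDmem n) hAm)
        (MS.diff_mem hA (hfat n).1 hAm) fun x hx => ⟨hDsub n hx.1, hx.2⟩
      have := hpos _ (MS.diff_mem hA (hDmem n) hAm)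
      linarith
  · have haux : ∀ m n : ℕ, m < n → Disjoint (D m) (D n) := by
      intro m n hmn
      refine Set.disjoint_left.2 fun x hxm hxn => ?_
      have hsup : f m ⊆ (Finset.range n).sup f := Finset.le_sup (Finset.mem_range.2 hmn)
      exact hxn.2 (hsup (hDsub m hxm))
    rintro g ⟨m, -, rfl⟩ g' ⟨n, -, rfl⟩ hne
    rcases lt_trichotomy m n with h | h | h
    · exact haux m n h
    · exact absurd (congrArg D h) hne
    · exact (haux n m h).symm
  · intro B hB
    obtain ⟨m, hmM, hme⟩ := hcover B hB
    have hex : ∃ n, MS.eqv l B (f n) := by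
      obtain ⟨k, hk⟩ : ∃ k, f k = m := by
        have : m ∈ Set.range f := hf ▸ hmM
        exact this.imp fun k h => h
      exact ⟨k, hk ▸ hme⟩
    set n := Nat.find hex with hn
    have hBn : MS.eqv l B (f n) := Nat.find_spec hex
    have hmin : ∀ j < n, ¬ MS.eqv l B (f j) := fun j hj => Nat.find_min hex hj
    have hzero : ∀ j < n, l (f n ∩ f j) = 0 := by
      intro j hj
      by_cases hfe : f j = f n
      · exact absurd (hfe ▸ hBn) (hmin j hj)
      rcases MS.dichotomy hA hl hpos (hfat n) (hfat j) with h | h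
      · exact h
      · exact absurd (MS.eqv_trans hA hl hpos hB.1 (hfat n).1 (hfat j).1 hBn h) (hmin j hj)
    have hsupmem : (Finset.range n).sup f ∈ 𝒜 := MS.sup_mem hA _ f fun i _ => (hfat i).1
    have hns : l (f n ∩ (Finset.range n).sup f) = 0 := by
      have h1 := MS.inter_sup hA hl hpos (Finset.range n) f (hfat n).1 fun i _ => (hfat i).1
      have h2 : ∑ j ∈ Finset.range n, l (f n ∩ f j) = 0 :=
        Finset.sum_eq_zero fun j hj => hzero j (Finset.mem_range.1 hj)
      have h3 := hpos _ (MS.inter_mem hA (hfat n).1 hsupmem)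
      linarith
    have hDl : l (D n) = l (f n) := by
      have e := MS.split hA hl (hfat n).1 hsupmem
      rw [hns] at e
      simpa [hD] using e.symm
    have hposD : 0 < l (D n) := hDl ▸ (hfat n).2.1
    refine ⟨D n, ⟨n, hposD, rfl⟩, ?_⟩
    have heqvD : MS.eqv l (f n) (D n) := by
      constructor
      · have e : f n \ D n = f n ∩ (Finset.range n).sup f := by
          rw [hD]; exact Set.diff_diff_right_self _ _
        rw [e]; exact hns
      · have e : D n \ f n = ∅ := Set.diff_eq_empty.2 (hDsub n)
        rw [e]; exact hl.1
    have hBD : MS.eqv l B (D n) :=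
      MS.eqv_trans hA hl hpos hB.1 (hfat n).1 (hDmem n) hBn heqvD
    have h1 := MS.subadd hA hl hpos (MS.diff_mem hA hB.1 (hDmem n))
      (MS.diff_mem hA (hDmem n) hB.1)
    have h2 := hpos _ (MS.union_mem hA (MS.diff_mem hA hB.1 (hDmem n))
      (MS.diff_mem hA (hDmem n) hB.1))
    rw [Set.symmDiff_def]
    linarith [hBD.1, hBD.2]
end

section
/- Let A be an algebra over Ω, λ, μ, ν ∈ ba(A) with λ, ν positive. Suppose μ ≪ λ, ν ⊥ |μ| (i.e., for every ε > 0 there exists B ∈ A with |μ|(Bᶜ) + ν(B) < ε), and λ = ρ + ν with ρ ∈ ba(A)₊. Then μ ≪ ρ. -/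
open Set Filter Topology

variable {Ω : Type*}

section Helpers

variable {𝒜 : Set (Set Ω)}

lemma alg_inter (hA : IsAlg 𝒜) {A B : Set Ω} (h1 : A ∈ 𝒜) (h2 : B ∈ 𝒜) : A ∩ B ∈ 𝒜 := by
  obtain ⟨-, -, hc, hu⟩ := hA
  have := hc _ (hu _ (hc _ h1) _ (hc _ h2))
  rwa [Set.compl_union, compl_compl, compl_compl] at this

lemma alg_diff (hA : IsAlg 𝒜) {A B : Set Ω} (h1 : A ∈ 𝒜) (h2 : B ∈ 𝒜) : A \ B ∈ 𝒜 := by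
  rw [Set.diff_eq]
  exact alg_inter hA h1 (hA.2.2.1 _ h2)

lemma tv_bdd (hA : IsAlg 𝒜) {μ : Set Ω → ℝ} (hμ : IsFinAdd 𝒜 μ) {A : Set Ω} (hAin : A ∈ 𝒜) :
    BddAbove {x | ∃ B ∈ 𝒜, B ⊆ A ∧ x = μ B - μ (A \ B)} := by
  obtain ⟨C, hC⟩ := hμ.2.2
  refine ⟨2 * C, ?_⟩
  rintro x ⟨B, hB, -, rfl⟩
  have h1 := hC B hB
  have h2 := hC (A \ B) (alg_diff hA hAin hB)
  have := abs_le.1 h1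
  have := abs_le.1 h2
  linarith

lemma mem_le_tv (hA : IsAlg 𝒜) {μ : Set Ω → ℝ} (hμ : IsFinAdd 𝒜 μ) {A B : Set Ω}
    (hAin : A ∈ 𝒜) (hB : B ∈ 𝒜) (hBA : B ⊆ A) : μ B - μ (A \ B) ≤ tv 𝒜 μ A :=
  le_csSup (tv_bdd hA hμ hAin) ⟨B, hB, hBA, rfl⟩

lemma self_le_tv (hA : IsAlg 𝒜) {μ : Set Ω → ℝ} (hμ : IsFinAdd 𝒜 μ) {A : Set Ω}
    (hAin : A ∈ 𝒜) : μ A ≤ tv 𝒜 μ A := by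
  have := mem_le_tv hA hμ hAin hAin subset_rfl
  simpa [hμ.1] using this

lemma tv_nonneg (hA : IsAlg 𝒜) {μ : Set Ω → ℝ} (hμ : IsFinAdd 𝒜 μ) {A : Set Ω}
    (hAin : A ∈ 𝒜) : 0 ≤ tv 𝒜 μ A := by
  have h1 := self_le_tv hA hμ hAin
  have h2 := mem_le_tv hA hμ hAin hA.1 (Set.empty_subset A)
  simp only [hμ.1, Set.diff_empty, zero_sub] at h2
  linarith

/-- additivity split: μ E = μ (E∩B) + μ (E\B). -/
lemma split_add (hA : IsAlg 𝒜) {μ : Set Ω → ℝ} (hμ : IsFinAdd 𝒜 μ) {E B : Set Ω}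
    (hE : E ∈ 𝒜) (hB : B ∈ 𝒜) : μ E = μ (E ∩ B) + μ (E \ B) := by
  have hd : Disjoint (E ∩ B) (E \ B) := by
    rw [Set.disjoint_left]; rintro x ⟨-, hx⟩ ⟨-, hx'⟩; exact hx' hx
  have := hμ.2.1 _ (alg_inter hA hE hB) _ (alg_diff hA hE hB) hd
  rwa [Set.inter_union_diff] at this

lemma tv_le_of_pos (hA : IsAlg 𝒜) {l : Set Ω → ℝ} (hl : IsFinAdd 𝒜 l) (hlpos : IsPos 𝒜 l)
    {A : Set Ω} (hAin : A ∈ 𝒜) : tv 𝒜 l A ≤ l A := by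
  refine csSup_le ⟨_, A, hAin, subset_rfl, rfl⟩ ?_
  rintro x ⟨B, hB, hBA, rfl⟩
  have h1 : l A = l (A ∩ B) + l (A \ B) := split_add hA hl hAin hB
  rw [Set.inter_eq_self_of_subset_right hBA] at h1
  have h2 := hlpos _ (alg_diff hA hAin hB)
  linarith

lemma tv_mono (hA : IsAlg 𝒜) {μ : Set Ω → ℝ} (hμ : IsFinAdd 𝒜 μ) {A A' : Set Ω}
    (hAin : A ∈ 𝒜) (hA'in : A' ∈ 𝒜) (hsub : A ⊆ A') : tv 𝒜 μ A ≤ tv 𝒜 μ A' := by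
  refine csSup_le ⟨_, A, hAin, subset_rfl, rfl⟩ ?_
  rintro x ⟨B, hB, hBA, rfl⟩
  have hD : A' \ A ∈ 𝒜 := alg_diff hA hA'in hAin
  rcases le_or_gt 0 (μ (A' \ A)) with hpos | hneg
  · -- take B' = B ∪ (A' \ A)
    have hB' : B ∪ (A' \ A) ∈ 𝒜 := hA.2.2.2 _ hB _ hD
    have hdisj : Disjoint B (A' \ A) := by
      rw [Set.disjoint_left]; intro x hx hx'; exact hx'.2 (hBA hx)
    have hadd : μ (B ∪ (A' \ A)) = μ B + μ (A' \ A) := hμ.2.1 _ hB _ hD hdisj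
    have hset : A' \ (B ∪ (A' \ A)) = A \ B := by
      ext x
      constructor
      · rintro ⟨hx, hx'⟩
        simp only [Set.mem_union, Set.mem_diff, not_or, not_and, not_not] at hx'
        exact ⟨hx'.2 hx, hx'.1⟩
      · rintro ⟨hx, hx'⟩
        exact ⟨hsub hx, by simp [hx', hx]⟩
    have := mem_le_tv hA hμ hA'in hB' (Set.union_subset (hBA.trans hsub) Set.diff_subset)
    rw [hadd, hset] at this
    linarith
  · -- take B' = B
    have hset : A' \ B = (A \ B) ∪ (A' \ A) := by
      ext x
      constructor
      · rintro ⟨hx, hx'⟩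
        by_cases hxA : x ∈ A
        · exact Or.inl ⟨hxA, hx'⟩
        · exact Or.inr ⟨hx, hxA⟩
      · rintro (⟨hx, hx'⟩ | ⟨hx, hx'⟩)
        · exact ⟨hsub hx, hx'⟩
        · exact ⟨hx, fun h => hx' (hBA h)⟩
    have hdisj : Disjoint (A \ B) (A' \ A) := by
      rw [Set.disjoint_left]; rintro x ⟨hx, -⟩ ⟨-, hx'⟩; exact hx' hx
    have hadd : μ (A' \ B) = μ (A \ B) + μ (A' \ A) := by
      rw [hset]; exact hμ.2.1 _ (alg_diff hA hAin hB) _ hD hdisj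
    have := mem_le_tv hA hμ hA'in hB (hBA.trans hsub)
    rw [hadd] at this
    linarith

lemma tv_union_le (hA : IsAlg 𝒜) {μ : Set Ω → ℝ} (hμ : IsFinAdd 𝒜 μ) {A B : Set Ω}
    (hAin : A ∈ 𝒜) (hBin : B ∈ 𝒜) (hd : Disjoint A B) :
    tv 𝒜 μ (A ∪ B) ≤ tv 𝒜 μ A + tv 𝒜 μ B := by
  have hU : A ∪ B ∈ 𝒜 := hA.2.2.2 _ hAin _ hBin
  refine csSup_le ⟨_, A ∪ B, hU, subset_rfl, rfl⟩ ?_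
  rintro x ⟨C, hC, hCU, rfl⟩
  -- μ C = μ (C∩A) + μ (C∩B)
  have hCA : C ∩ A ∈ 𝒜 := alg_inter hA hC hAin
  have hCB : C ∩ B ∈ 𝒜 := alg_inter hA hC hBin
  have hCsplit : μ C = μ (C ∩ A) + μ (C ∩ B) := by
    have := split_add hA hμ hC hAin
    have hCB' : C \ A = C ∩ B := by
      ext x
      constructor
      · rintro ⟨hx, hx'⟩
        rcases hCU hx with h | h
        · exact absurd h hx'
        · exact ⟨hx, h⟩
      · rintro ⟨hx, hx'⟩
        exact ⟨hx, fun h => Set.disjoint_left.1 hd h hx'⟩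
    rwa [hCB'] at this
  -- μ ((A∪B)\C) = μ (A\C) + μ (B\C)
  have hsplit2 : μ ((A ∪ B) \ C) = μ (A \ C) + μ (B \ C) := by
    rw [Set.union_diff_distrib]
    apply hμ.2.1 _ (alg_diff hA hAin hC) _ (alg_diff hA hBin hC)
    exact hd.mono Set.diff_subset Set.diff_subset
  have h1 : μ (C ∩ A) - μ (A \ C) ≤ tv 𝒜 μ A := by
    have := mem_le_tv hA hμ hAin hCA Set.inter_subset_right
    have hset : A \ (C ∩ A) = A \ C := by
      ext x; simp only [Set.mem_diff, Set.mem_inter_iff]; tauto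
    rwa [hset] at this
  have h2 : μ (C ∩ B) - μ (B \ C) ≤ tv 𝒜 μ B := by
    have := mem_le_tv hA hμ hBin hCB Set.inter_subset_right
    have hset : B \ (C ∩ B) = B \ C := by
      ext x; simp only [Set.mem_diff, Set.mem_inter_iff]; tauto
    rwa [hset] at this
  linarith

end Helpers

/-- key Halmos–Savage step: μ ≪ λ, ν ⊥ |μ|, λ = ρ + ν ⟹ μ ≪ ρ. -/
theorem ac_passes_to_part {Ω : Type*} (𝒜 : Set (Set Ω)) (hA : IsAlg 𝒜)
    (l μ ν ρ : Set Ω → ℝ)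
    (hl : IsFinAdd 𝒜 l) (hμ : IsFinAdd 𝒜 μ) (hν : IsFinAdd 𝒜 ν) (hρ : IsFinAdd 𝒜 ρ)
    (hlpos : IsPos 𝒜 l) (hνpos : IsPos 𝒜 ν) (hρpos : IsPos 𝒜 ρ)
    (hac : AC 𝒜 μ l)
    (hsing : ∀ ε > (0:ℝ), ∃ B ∈ 𝒜, tv 𝒜 μ Bᶜ + ν B < ε)
    (hdec : ∀ A ∈ 𝒜, l A = ρ A + ν A) :
    AC 𝒜 μ ρ := by
  intro ε hε
  obtain ⟨δ, hδpos, hδ⟩ := hac (ε / 2) (by linarith)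
  have hη : (0:ℝ) < min (ε / 2) (δ / 2) := lt_min (by linarith) (by linarith)
  obtain ⟨B, hB, hBsing⟩ := hsing _ hη
  have hBc : Bᶜ ∈ 𝒜 := hA.2.2.1 _ hB
  have hνB : 0 ≤ ν B := hνpos _ hB
  have htvBc : 0 ≤ tv 𝒜 μ Bᶜ := tv_nonneg hA hμ hBc
  refine ⟨δ / 2, by linarith, fun E hE hEρ => ?_⟩
  have hEB : E ∩ B ∈ 𝒜 := alg_inter hA hE hB
  have hEBc : E ∩ Bᶜ ∈ 𝒜 := alg_inter hA hE hBc
  -- tv l (E∩B) < δ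
  have hlEB : tv 𝒜 l (E ∩ B) < δ := by
    have h1 : tv 𝒜 l (E ∩ B) ≤ l (E ∩ B) := tv_le_of_pos hA hl hlpos hEB
    have h2 : l (E ∩ B) = ρ (E ∩ B) + ν (E ∩ B) := hdec _ hEB
    -- ρ (E∩B) ≤ ρ E ≤ tv ρ E
    have h3 : ρ (E ∩ B) ≤ ρ E := by
      have := split_add hA hρ hE hB
      have := hρpos _ (alg_diff hA hE hB)
      linarith
    have h4 : ρ E ≤ tv 𝒜 ρ E := self_le_tv hA hρ hE
    -- ν (E∩B) ≤ ν B
    have h5 : ν (E ∩ B) ≤ ν B := by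
      have heq : ν B = ν (B ∩ E) + ν (B \ E) := split_add hA hν hB hE
      have := hνpos _ (alg_diff hA hB hE)
      rw [Set.inter_comm] at heq
      linarith
    have h6 : ν B < δ / 2 := lt_of_lt_of_le (by linarith) (min_le_right _ _)
    linarith
  have hμEB : tv 𝒜 μ (E ∩ B) < ε / 2 := hδ _ hEB hlEB
  have hμEBc : tv 𝒜 μ (E ∩ Bᶜ) < ε / 2 := by
    have h1 : tv 𝒜 μ (E ∩ Bᶜ) ≤ tv 𝒜 μ Bᶜ :=
      tv_mono hA hμ hEBc hBc Set.inter_subset_right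
    have h2 : tv 𝒜 μ Bᶜ < ε / 2 := lt_of_lt_of_le (by linarith) (min_le_left _ _)
    linarith
  have hsplitE : tv 𝒜 μ E ≤ tv 𝒜 μ (E ∩ B) + tv 𝒜 μ (E ∩ Bᶜ) := by
    have hd : Disjoint (E ∩ B) (E ∩ Bᶜ) := by
      rw [Set.disjoint_left]; rintro x ⟨-, hx⟩ ⟨-, hx'⟩; exact hx' hx
    have hun : E ∩ B ∪ E ∩ Bᶜ = E := by
      rw [← Set.inter_union_distrib_left, Set.union_compl_self, Set.inter_univ]
    have := tv_union_le hA hμ hEB hEBc hd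
    rwa [hun] at this
  linarith
end
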